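/- arXiv:1910.00811 — 3 statements merged into one kernel-verified Lean document; each statement's English description precedes it below -/
import Mathlib

section
/- Let $R \geq 1$ and let $u$ be a radial solution of the linear wave equation $\partial_t^2 u - \Delta u = 0$ on $\Omega = \mathbb{R}^3 \setminus \overline{B(0,1)}$ with Dirichlet boundary condition $u(t,1)=0$ and initial data $(u_0,u_1) \in \dot H^1_0 \times L^2$ radial. Then the sum over both time directions of the limits $\lim_{t\to\pm\infty} \int_{R+|t|}^{\infty} \big((\partial_r(ru))^2 + (\partial_t(ru))^2\big)\,dr$ equals $\int_R^{\infty} \big((\partial_r(ru_0))^2 + r^2 u_1^2\big)\,dr$. -/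
open MeasureTheory Filter Set Real


noncomputable def WV (u : ℝ → ℝ → ℝ) : ℝ × ℝ → ℝ := fun p => p.2 * u p.1 p.2
noncomputable def W1 (u : ℝ → ℝ → ℝ) : ℝ × ℝ → ℝ := fun p => fderiv ℝ (WV u) p (1, 0)
noncomputable def W2 (u : ℝ → ℝ → ℝ) : ℝ × ℝ → ℝ := fun p => fderiv ℝ (WV u) p (0, 1)

lemma hasDerivAt_fst_slice {f : ℝ × ℝ → ℝ} {t r : ℝ} (hd : DifferentiableAt ℝ f (t, r)) :
    HasDerivAt (fun s => f (s, r)) (fderiv ℝ f (t, r) (1, 0)) t := by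
  have h1 : HasDerivAt (fun s : ℝ => (s, r)) ((1 : ℝ), (0 : ℝ)) t :=
    (hasDerivAt_id t).prodMk (hasDerivAt_const t r)
  exact (hd.hasFDerivAt.comp_hasDerivAt t h1 :)

lemma hasDerivAt_snd_slice {f : ℝ × ℝ → ℝ} {t r : ℝ} (hd : DifferentiableAt ℝ f (t, r)) :
    HasDerivAt (fun ρ => f (t, ρ)) (fderiv ℝ f (t, r) (0, 1)) r := by
  have h1 : HasDerivAt (fun ρ : ℝ => (t, ρ)) ((0 : ℝ), (1 : ℝ)) r :=
    (hasDerivAt_const r t).prodMk (hasDerivAt_id r)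
  exact (hd.hasFDerivAt.comp_hasDerivAt r h1 :)

section
variable {u : ℝ → ℝ → ℝ}

lemma wv_contDiffAt (hreg : ContDiffOn ℝ 2 (fun p : ℝ × ℝ => u p.1 p.2) {p : ℝ × ℝ | 1 < p.2})
    {t r : ℝ} (hr : 1 < r) : ContDiffAt ℝ 2 (WV u) (t, r) := by
  have hΩ : IsOpen {p : ℝ × ℝ | 1 < p.2} := isOpen_lt continuous_const continuous_snd
  have hmem : {p : ℝ × ℝ | 1 < p.2} ∈ nhds ((t, r) : ℝ × ℝ) := hΩ.mem_nhds (by simpa using hr)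
  exact (contDiff_snd.contDiffAt.of_le le_top).mul (hreg.contDiffAt hmem)

lemma wv_diffAt (hreg : ContDiffOn ℝ 2 (fun p : ℝ × ℝ => u p.1 p.2) {p : ℝ × ℝ | 1 < p.2})
    {t r : ℝ} (hr : 1 < r) : DifferentiableAt ℝ (WV u) (t, r) :=
  (wv_contDiffAt hreg hr).differentiableAt (by norm_num)

lemma dV_contDiffAt (hreg : ContDiffOn ℝ 2 (fun p : ℝ × ℝ => u p.1 p.2) {p : ℝ × ℝ | 1 < p.2})
    {t r : ℝ} (hr : 1 < r) : ContDiffAt ℝ 1 (fderiv ℝ (WV u)) (t, r) :=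
  (wv_contDiffAt hreg hr).fderiv_right (by norm_num)

lemma dV_diffAt (hreg : ContDiffOn ℝ 2 (fun p : ℝ × ℝ => u p.1 p.2) {p : ℝ × ℝ | 1 < p.2})
    {t r : ℝ} (hr : 1 < r) : DifferentiableAt ℝ (fderiv ℝ (WV u)) (t, r) :=
  (dV_contDiffAt hreg hr).differentiableAt one_ne_zero

-- the symmetric second derivative
lemma symm_sec (hreg : ContDiffOn ℝ 2 (fun p : ℝ × ℝ => u p.1 p.2) {p : ℝ × ℝ | 1 < p.2})
    {t r : ℝ} (hr : 1 < r) (v w : ℝ × ℝ) :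
    fderiv ℝ (fderiv ℝ (WV u)) (t, r) v w = fderiv ℝ (fderiv ℝ (WV u)) (t, r) w v := by
  have hΩ : IsOpen {p : ℝ × ℝ | 1 < p.2} := isOpen_lt continuous_const continuous_snd
  have hmem : {p : ℝ × ℝ | 1 < p.2} ∈ nhds ((t, r) : ℝ × ℝ) := hΩ.mem_nhds (by simpa using hr)
  have hev : ∀ᶠ y in nhds ((t, r) : ℝ × ℝ), HasFDerivAt (WV u) (fderiv ℝ (WV u) y) y := by
    filter_upwards [hmem] with y hy
    exact (wv_diffAt hreg (by simpa using hy) (t := y.1) (r := y.2)).hasFDerivAt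
  exact second_derivative_symmetric_of_eventually hev (dV_diffAt hreg hr).hasFDerivAt v w

-- W1 as composition, differentiability and fderiv formula
lemma w1_hasFDerivAt (hreg : ContDiffOn ℝ 2 (fun p : ℝ × ℝ => u p.1 p.2) {p : ℝ × ℝ | 1 < p.2})
    {t r : ℝ} (hr : 1 < r) (e : ℝ × ℝ) :
    HasFDerivAt (fun p => fderiv ℝ (WV u) p e)
      ((ContinuousLinearMap.apply ℝ ℝ e).comp (fderiv ℝ (fderiv ℝ (WV u)) (t, r))) (t, r) :=
  (ContinuousLinearMap.apply ℝ ℝ e).hasFDerivAt.comp (t, r) (dV_diffAt hreg hr).hasFDerivAt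

end

section
variable {u : ℝ → ℝ → ℝ}
variable (hreg : ContDiffOn ℝ 2 (fun p : ℝ × ℝ => u p.1 p.2) {p : ℝ × ℝ | 1 < p.2})

include hreg

-- slice derivative identities
lemma w1_eq_deriv {t r : ℝ} (hr : 1 < r) :
    deriv (fun s => r * u s r) t = W1 u (t, r) :=
  (hasDerivAt_fst_slice (wv_diffAt hreg hr)).deriv

lemma w2_eq_deriv {t r : ℝ} (hr : 1 < r) :
    deriv (fun ρ => ρ * u t ρ) r = W2 u (t, r) :=
  (hasDerivAt_snd_slice (wv_diffAt hreg hr)).deriv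

lemma fderiv_W1 {t r : ℝ} (hr : 1 < r) (w : ℝ × ℝ) :
    fderiv ℝ (W1 u) (t, r) w = fderiv ℝ (fderiv ℝ (WV u)) (t, r) w (1, 0) := by
  have h := (w1_hasFDerivAt hreg (t := t) hr ((1 : ℝ), (0 : ℝ))).fderiv
  rw [show W1 u = fun p => fderiv ℝ (WV u) p (1, 0) from rfl, h]; rfl

lemma fderiv_W2 {t r : ℝ} (hr : 1 < r) (w : ℝ × ℝ) :
    fderiv ℝ (W2 u) (t, r) w = fderiv ℝ (fderiv ℝ (WV u)) (t, r) w (0, 1) := by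
  have h := (w1_hasFDerivAt hreg (t := t) hr ((0 : ℝ), (1 : ℝ))).fderiv
  rw [show W2 u = fun p => fderiv ℝ (WV u) p (0, 1) from rfl, h]; rfl

lemma w1_diffAt {t r : ℝ} (hr : 1 < r) : DifferentiableAt ℝ (W1 u) (t, r) :=
  (w1_hasFDerivAt hreg hr ((1 : ℝ), (0 : ℝ))).differentiableAt

lemma w2_diffAt {t r : ℝ} (hr : 1 < r) : DifferentiableAt ℝ (W2 u) (t, r) :=
  (w1_hasFDerivAt hreg hr ((0 : ℝ), (1 : ℝ))).differentiableAt

-- wave equation in second-derivative form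
lemma wave_sec
    (hwave : ∀ t : ℝ, ∀ r : ℝ, 1 < r →
      deriv (fun s => deriv (fun s' => r * u s' r) s) t =
      deriv (fun ρ => deriv (fun ρ' => ρ' * u t ρ') ρ) r)
    {t r : ℝ} (hr : 1 < r) :
    fderiv ℝ (fderiv ℝ (WV u)) (t, r) (1, 0) (1, 0)
      = fderiv ℝ (fderiv ℝ (WV u)) (t, r) (0, 1) (0, 1) := by
  have hL : deriv (fun s => deriv (fun s' => r * u s' r) s) t
      = fderiv ℝ (fderiv ℝ (WV u)) (t, r) (1, 0) (1, 0) := by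
    have h1 : (fun s => deriv (fun s' => r * u s' r) s) = fun s => W1 u (s, r) := by
      funext s; exact w1_eq_deriv hreg hr
    rw [h1, (hasDerivAt_fst_slice (w1_diffAt hreg hr)).deriv, fderiv_W1 hreg hr]
  have hR : deriv (fun ρ => deriv (fun ρ' => ρ' * u t ρ') ρ) r
      = fderiv ℝ (fderiv ℝ (WV u)) (t, r) (0, 1) (0, 1) := by
    have h2 : ∀ᶠ ρ in nhds r, deriv (fun ρ' => ρ' * u t ρ') ρ = W2 u (t, ρ) := by
      filter_upwards [eventually_gt_nhds hr] with ρ hρ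
      exact w2_eq_deriv hreg hρ
    rw [Filter.EventuallyEq.deriv_eq h2,
      (hasDerivAt_snd_slice (w2_diffAt hreg hr)).deriv, fderiv_W2 hreg hr]
  rw [← hL, ← hR, hwave t r hr]

end

section
variable {u : ℝ → ℝ → ℝ}
variable (hreg : ContDiffOn ℝ 2 (fun p : ℝ × ℝ => u p.1 p.2) {p : ℝ × ℝ | 1 < p.2})
variable (hwave : ∀ t : ℝ, ∀ r : ℝ, 1 < r →
      deriv (fun s => deriv (fun s' => r * u s' r) s) t =
      deriv (fun ρ => deriv (fun ρ' => ρ' * u t ρ') ρ) r)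

include hreg hwave

lemma transport_plus {t r : ℝ} (hr : 1 < r) (htr : 1 < t + r) :
    W2 u (t, r) + W1 u (t, r) = W2 u (0, t + r) + W1 u (0, t + r) := by
  set c : ℝ := t + r with hc
  set φ : ℝ → ℝ := fun τ => W2 u (τ, c - τ) + W1 u (τ, c - τ) with hφ
  have hkey : ∀ τ : ℝ, τ < c - 1 → HasDerivAt φ 0 τ := by
    intro τ hτ
    have hρ : 1 < c - τ := by linarith
    have hγ : HasDerivAt (fun τ : ℝ => ((τ, c - τ) : ℝ × ℝ)) ((1 : ℝ), (-1 : ℝ)) τ :=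
      (hasDerivAt_id τ).prodMk ((hasDerivAt_id τ).const_sub c)
    have h2 : HasDerivAt (fun τ => W2 u (τ, c - τ))
        (fderiv ℝ (W2 u) (τ, c - τ) (1, -1)) τ :=
      ((w2_diffAt hreg hρ).hasFDerivAt.comp_hasDerivAt τ hγ :)
    have h1 : HasDerivAt (fun τ => W1 u (τ, c - τ))
        (fderiv ℝ (W1 u) (τ, c - τ) (1, -1)) τ :=
      ((w1_diffAt hreg hρ).hasFDerivAt.comp_hasDerivAt τ hγ :)
    have hsum := h2.add h1
    have hval : fderiv ℝ (W2 u) (τ, c - τ) (1, -1) + fderiv ℝ (W1 u) (τ, c - τ) (1, -1) = 0 := by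
      rw [fderiv_W2 hreg hρ, fderiv_W1 hreg hρ]
      have he : ((1 : ℝ), (-1 : ℝ)) = ((1 : ℝ), (0 : ℝ)) - ((0 : ℝ), (1 : ℝ)) := by
        simp [Prod.ext_iff]
      rw [he, map_sub]
      have hw := wave_sec hreg hwave (t := τ) hρ
      have hs := symm_sec hreg (t := τ) hρ ((1 : ℝ), (0 : ℝ)) ((0 : ℝ), (1 : ℝ))
      simp only [ContinuousLinearMap.sub_apply]
      linarith
    rw [hval] at hsum
    exact hsum
  have hmem : ∀ τ ∈ Icc (min 0 t) (max 0 t), HasDerivAt φ 0 τ := by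
    intro τ hτ
    apply hkey
    rcases le_total 0 t with h | h
    · have : τ ≤ t := by simpa [max_eq_right h] using hτ.2
      simp only [hc]; linarith
    · have : τ ≤ 0 := by simpa [max_eq_left h] using hτ.2
      simp only [hc]; linarith
  have hconst : φ t = φ 0 := by
    rcases le_total 0 t with h | h
    · have := constant_of_has_deriv_right_zero
        (f := φ) (a := 0) (b := t)
        (fun x hx => ((hmem x (by simpa [min_eq_left h, max_eq_right h] using hx)).continuousAt).continuousWithinAt)
        (fun x hx => (hmem x (by
          simp only [min_eq_left h, max_eq_right h]
          exact ⟨hx.1, hx.2.le⟩)).hasDerivWithinAt)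
      exact this t (by simp [h])
    · have := constant_of_has_deriv_right_zero
        (f := φ) (a := t) (b := 0)
        (fun x hx => ((hmem x (by simpa [min_eq_right h, max_eq_left h] using hx)).continuousAt).continuousWithinAt)
        (fun x hx => (hmem x (by
          simp only [min_eq_right h, max_eq_left h]
          exact ⟨hx.1, hx.2.le⟩)).hasDerivWithinAt)
      exact (this 0 (by simp [h])).symm
  have h1 : φ t = W2 u (t, r) + W1 u (t, r) := by simp [hφ, hc]
  have h0 : φ 0 = W2 u (0, t + r) + W1 u (0, t + r) := by simp [hφ, hc]
  rw [← h1, ← h0, hconst]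

lemma transport_minus {t r : ℝ} (hr : 1 < r) (hrt : 1 < r - t) :
    W2 u (t, r) - W1 u (t, r) = W2 u (0, r - t) - W1 u (0, r - t) := by
  set c : ℝ := r - t with hc
  set φ : ℝ → ℝ := fun τ => W2 u (τ, c + τ) - W1 u (τ, c + τ) with hφ
  have hkey : ∀ τ : ℝ, 1 - c < τ → HasDerivAt φ 0 τ := by
    intro τ hτ
    have hρ : 1 < c + τ := by linarith
    have hγ : HasDerivAt (fun τ : ℝ => ((τ, c + τ) : ℝ × ℝ)) ((1 : ℝ), (1 : ℝ)) τ :=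
      (hasDerivAt_id τ).prodMk ((hasDerivAt_id τ).const_add c)
    have h2 : HasDerivAt (fun τ => W2 u (τ, c + τ))
        (fderiv ℝ (W2 u) (τ, c + τ) (1, 1)) τ :=
      ((w2_diffAt hreg hρ).hasFDerivAt.comp_hasDerivAt τ hγ :)
    have h1 : HasDerivAt (fun τ => W1 u (τ, c + τ))
        (fderiv ℝ (W1 u) (τ, c + τ) (1, 1)) τ :=
      ((w1_diffAt hreg hρ).hasFDerivAt.comp_hasDerivAt τ hγ :)
    have hsum := h2.sub h1
    have hval : fderiv ℝ (W2 u) (τ, c + τ) (1, 1) - fderiv ℝ (W1 u) (τ, c + τ) (1, 1) = 0 := by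
      rw [fderiv_W2 hreg hρ, fderiv_W1 hreg hρ]
      have he : ((1 : ℝ), (1 : ℝ)) = ((1 : ℝ), (0 : ℝ)) + ((0 : ℝ), (1 : ℝ)) := by
        simp [Prod.ext_iff]
      rw [he, map_add]
      have hw := wave_sec hreg hwave (t := τ) hρ
      have hs := symm_sec hreg (t := τ) hρ ((1 : ℝ), (0 : ℝ)) ((0 : ℝ), (1 : ℝ))
      simp only [ContinuousLinearMap.add_apply]
      linarith
    rw [hval] at hsum
    exact hsum
  have hmem : ∀ τ ∈ Icc (min 0 t) (max 0 t), HasDerivAt φ 0 τ := by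
    intro τ hτ
    apply hkey
    rcases le_total 0 t with h | h
    · have : 0 ≤ τ := by simpa [min_eq_left h] using hτ.1
      simp only [hc]; linarith
    · have : t ≤ τ := by simpa [min_eq_right h] using hτ.1
      simp only [hc]; linarith
  have hconst : φ t = φ 0 := by
    rcases le_total 0 t with h | h
    · have := constant_of_has_deriv_right_zero
        (f := φ) (a := 0) (b := t)
        (fun x hx => ((hmem x (by simpa [min_eq_left h, max_eq_right h] using hx)).continuousAt).continuousWithinAt)
        (fun x hx => (hmem x (by
          simp only [min_eq_left h, max_eq_right h]
          exact ⟨hx.1, hx.2.le⟩)).hasDerivWithinAt)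
      exact this t (by simp [h])
    · have := constant_of_has_deriv_right_zero
        (f := φ) (a := t) (b := 0)
        (fun x hx => ((hmem x (by simpa [min_eq_right h, max_eq_left h] using hx)).continuousAt).continuousWithinAt)
        (fun x hx => (hmem x (by
          simp only [min_eq_right h, max_eq_left h]
          exact ⟨hx.1, hx.2.le⟩)).hasDerivWithinAt)
      exact (this 0 (by simp [h])).symm
  have h1 : φ t = W2 u (t, r) - W1 u (t, r) := by simp [hφ, hc]
  have h0 : φ 0 = W2 u (0, r - t) - W1 u (0, r - t) := by simp [hφ, hc]
  rw [← h1, ← h0, hconst]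

end

-- translation of set integrals over Ioi
lemma shift_Ioi_integral (f : ℝ → ℝ) (b a : ℝ) :
    ∫ r in Ioi b, f (r + a) = ∫ s in Ioi (b + a), f s := by
  rw [← integral_indicator measurableSet_Ioi, ← integral_indicator measurableSet_Ioi]
  have h : ∀ x : ℝ, (Ioi b).indicator (fun r => f (r + a)) x
      = (Ioi (b + a)).indicator f (x + a) := by
    intro x
    by_cases hx : x ∈ Ioi b
    · rw [indicator_of_mem hx, indicator_of_mem (by simpa using add_lt_add_right hx a)]
    · rw [indicator_of_notMem hx, indicator_of_notMem]
      simp only [mem_Ioi, not_lt] at hx ⊢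
      linarith
  rw [show ((Ioi b).indicator fun r => f (r + a)) = fun x => (Ioi (b + a)).indicator f (x + a)
    from funext h]
  exact integral_add_right_eq_self _ a

lemma shift_Ioi_integrableOn (f : ℝ → ℝ) (b a : ℝ) :
    IntegrableOn (fun r => f (r + a)) (Ioi b) ↔ IntegrableOn f (Ioi (b + a)) := by
  have h : ((Ioi b).indicator fun r => f (r + a)) = fun x => (Ioi (b + a)).indicator f (x + a) := by
    funext x
    by_cases hx : x ∈ Ioi b
    · rw [indicator_of_mem hx, indicator_of_mem (by simpa using add_lt_add_right hx a)]
    · rw [indicator_of_notMem hx, indicator_of_notMem]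
      simp only [mem_Ioi, not_lt] at hx ⊢
      linarith
  have e1 : IntegrableOn (fun r => f (r + a)) (Ioi b)
      ↔ Integrable ((Ioi b).indicator fun r => f (r + a)) volume :=
    (integrable_indicator_iff measurableSet_Ioi).symm
  have e2 : IntegrableOn f (Ioi (b + a))
      ↔ Integrable ((Ioi (b + a)).indicator f) volume :=
    (integrable_indicator_iff measurableSet_Ioi).symm
  rw [e1, e2, h]
  constructor
  · intro hI
    have h2 := hI.comp_add_right (-a)
    simpa using h2
  · intro hI
    exact hI.comp_add_right a

-- vanishing tails of an integrable function
lemma tendsto_tail_integral {f : ℝ → ℝ} {R : ℝ} (hf : IntegrableOn f (Ioi R))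
    {ι : Type*} {l : Filter ι} [l.IsCountablyGenerated] {b : ι → ℝ} (hb : Tendsto b l atTop) :
    Tendsto (fun i => ∫ s in Ioi (b i), f s) l (nhds 0) := by
  have h1 : Tendsto (fun i => ∫ s in R..(b i), f s) l (nhds (∫ s in Ioi R, f s)) :=
    intervalIntegral_tendsto_integral_Ioi R hf hb
  have h2 : ∀ᶠ i in l, ∫ s in Ioi (b i), f s = (∫ s in Ioi R, f s) - ∫ s in R..(b i), f s := by
    filter_upwards [hb.eventually_ge_atTop R] with i hi
    have hsplit : ∫ s in Ioi R, f s = (∫ s in Ioc R (b i), f s) + ∫ s in Ioi (b i), f s := by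
      rw [← setIntegral_union (Ioc_disjoint_Ioi le_rfl) measurableSet_Ioi
        (hf.mono_set (Ioc_subset_Ioi_self)) (hf.mono_set (Ioi_subset_Ioi hi)),
        Ioc_union_Ioi_eq_Ioi hi]
    rw [intervalIntegral.integral_of_le hi]
    rw [hsplit]; ring
  rw [show (0 : ℝ) = (∫ s in Ioi R, f s) - (∫ s in Ioi R, f s) by ring]
  exact Tendsto.congr' (h2.mono fun i hi => hi.symm) (tendsto_const_nhds.sub h1)

lemma extend_integrableOn {f : ℝ → ℝ} {R b : ℝ} (hR : 1 ≤ R)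
    (hf : ContinuousOn f (Ioi 0)) (hI : IntegrableOn f (Ioi b)) (hb : R ≤ b) :
    IntegrableOn f (Ioi R) := by
  rcases eq_or_lt_of_le hb with h | h
  · rwa [← h] at hI
  · have h1 : IntegrableOn f (Ioc R b) := by
      refine (ContinuousOn.integrableOn_compact isCompact_Icc ?_).mono_set Ioc_subset_Icc_self
      exact hf.mono (fun x hx => lt_of_lt_of_le (by linarith) hx.1)
    have := h1.union hI
    rwa [Ioc_union_Ioi_eq_Ioi hb] at this

lemma not_integrable_comb {g h : ℝ → ℝ} {R : ℝ} (hR : 1 ≤ R)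
    (hgc : ContinuousOn g (Ioi 0)) (hhc : ContinuousOn h (Ioi 0))
    (hP : ¬(IntegrableOn (fun s => (g s) ^ 2) (Ioi R) ∧ IntegrableOn (fun s => (h s) ^ 2) (Ioi R)))
    (b t : ℝ) (hb1 : R ≤ b + t) (hb2 : R ≤ b - t) :
    ¬ IntegrableOn (fun r => (1/2) * (g (r + t)) ^ 2 + (1/2) * (h (r - t)) ^ 2) (Ioi b) := by
  intro hI
  apply hP
  have hbpos : (0 : ℝ) < b + t := lt_of_lt_of_le (by linarith) hb1
  have hbpos2 : (0 : ℝ) < b - t := lt_of_lt_of_le (by linarith) hb2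
  constructor
  · have meas : AEStronglyMeasurable (fun r => (g (r + t)) ^ 2) (volume.restrict (Ioi b)) := by
      apply ContinuousOn.aestronglyMeasurable _ measurableSet_Ioi
      exact ((hgc.comp (continuous_id.add continuous_const).continuousOn
        (fun r hr => by simp only [mem_Ioi, id_eq, Pi.add_apply, Pi.sub_apply] at hr ⊢; linarith)).pow 2)
    have hdom : ∀ᵐ r ∂(volume.restrict (Ioi b)),
        ‖(g (r + t)) ^ 2‖ ≤ 2 * ((1/2) * (g (r + t)) ^ 2 + (1/2) * (h (r - t)) ^ 2) := by
      refine ae_of_all _ (fun r => ?_)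
      rw [Real.norm_eq_abs, abs_of_nonneg (sq_nonneg _)]
      nlinarith [sq_nonneg (h (r - t))]
    have hint : IntegrableOn (fun r => (g (r + t)) ^ 2) (Ioi b) :=
      Integrable.mono' (hI.const_mul 2) meas hdom
    have hshift : IntegrableOn (fun s => (g s) ^ 2) (Ioi (b + t)) :=
      (shift_Ioi_integrableOn (fun s => (g s) ^ 2) b t).mp hint
    exact extend_integrableOn hR (hgc.pow 2) hshift hb1
  · have meas : AEStronglyMeasurable (fun r => (h (r - t)) ^ 2) (volume.restrict (Ioi b)) := by
      apply ContinuousOn.aestronglyMeasurable _ measurableSet_Ioi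
      exact ((hhc.comp (continuous_id.sub continuous_const).continuousOn
        (fun r hr => by simp only [mem_Ioi, id_eq, Pi.add_apply, Pi.sub_apply] at hr ⊢; linarith)).pow 2)
    have hdom : ∀ᵐ r ∂(volume.restrict (Ioi b)),
        ‖(h (r - t)) ^ 2‖ ≤ 2 * ((1/2) * (g (r + t)) ^ 2 + (1/2) * (h (r - t)) ^ 2) := by
      refine ae_of_all _ (fun r => ?_)
      rw [Real.norm_eq_abs, abs_of_nonneg (sq_nonneg _)]
      nlinarith [sq_nonneg (g (r + t))]
    have hint : IntegrableOn (fun r => (h (r - t)) ^ 2) (Ioi b) :=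
      Integrable.mono' (hI.const_mul 2) meas hdom
    have hint' : IntegrableOn (fun r => (h (r + -t)) ^ 2) (Ioi b) := by
      simpa [sub_eq_add_neg] using hint
    have hshift : IntegrableOn (fun s => (h s) ^ 2) (Ioi (b + -t)) :=
      (shift_Ioi_integrableOn (fun s => (h s) ^ 2) b (-t)).mp hint'
    refine extend_integrableOn hR (hhc.pow 2) hshift (by linarith)

noncomputable def Gg (u : ℝ → ℝ → ℝ) : ℝ → ℝ := fun s => W2 u (-1, s + 1) + W1 u (-1, s + 1)
noncomputable def Hh (u : ℝ → ℝ → ℝ) : ℝ → ℝ := fun s => W2 u (1, s + 1) - W1 u (1, s + 1)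

section
variable {u : ℝ → ℝ → ℝ}
variable (hreg : ContDiffOn ℝ 2 (fun p : ℝ × ℝ => u p.1 p.2) {p : ℝ × ℝ | 1 < p.2})

include hreg

lemma cont_Gg : ContinuousOn (Gg u) (Ioi 0) := by
  intro s hs
  simp only [mem_Ioi] at hs
  have hρ : (1 : ℝ) < s + 1 := by linarith
  have h1 : ContinuousAt (fun s : ℝ => ((-1 : ℝ), s + 1)) s :=
    (continuous_const.prodMk (continuous_id.add continuous_const)).continuousAt
  have hc2 : ContinuousAt (fun s : ℝ => W2 u (-1, s + 1)) s :=
    ContinuousAt.comp (g := W2 u) (f := fun s : ℝ => ((-1 : ℝ), s + 1))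
      (w2_diffAt hreg (t := -1) hρ).continuousAt h1
  have hc1 : ContinuousAt (fun s : ℝ => W1 u (-1, s + 1)) s :=
    ContinuousAt.comp (g := W1 u) (f := fun s : ℝ => ((-1 : ℝ), s + 1))
      (w1_diffAt hreg (t := -1) hρ).continuousAt h1
  exact (hc2.add hc1).continuousWithinAt

lemma cont_Hh : ContinuousOn (Hh u) (Ioi 0) := by
  intro s hs
  simp only [mem_Ioi] at hs
  have hρ : (1 : ℝ) < s + 1 := by linarith
  have h1 : ContinuousAt (fun s : ℝ => ((1 : ℝ), s + 1)) s :=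
    (continuous_const.prodMk (continuous_id.add continuous_const)).continuousAt
  have hc2 : ContinuousAt (fun s : ℝ => W2 u (1, s + 1)) s :=
    ContinuousAt.comp (g := W2 u) (f := fun s : ℝ => ((1 : ℝ), s + 1))
      (w2_diffAt hreg (t := 1) hρ).continuousAt h1
  have hc1 : ContinuousAt (fun s : ℝ => W1 u (1, s + 1)) s :=
    ContinuousAt.comp (g := W1 u) (f := fun s : ℝ => ((1 : ℝ), s + 1))
      (w1_diffAt hreg (t := 1) hρ).continuousAt h1
  exact (hc2.sub hc1).continuousWithinAt

variable (hwave : ∀ t : ℝ, ∀ r : ℝ, 1 < r →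
      deriv (fun s => deriv (fun s' => r * u s' r) s) t =
      deriv (fun ρ => deriv (fun ρ' => ρ' * u t ρ') ρ) r)

include hwave

lemma Gg_eq {s : ℝ} (hs : 1 < s) : Gg u s = W2 u (0, s) + W1 u (0, s) := by
  have h := transport_plus hreg hwave (t := -1) (r := s + 1) (by linarith) (by linarith)
  rw [show (-1 : ℝ) + (s + 1) = s by ring] at h
  exact h

lemma Hh_eq {s : ℝ} (hs : 1 < s) : Hh u s = W2 u (0, s) - W1 u (0, s) := by
  have h := transport_minus hreg hwave (t := 1) (r := s + 1) (by linarith) (by linarith)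
  rw [show (s + 1 : ℝ) - 1 = s by ring] at h
  exact h

lemma rep_sq {t r : ℝ} (hr : 1 < r) (htr : 1 < t + r) (hrt : 1 < r - t) :
    (W2 u (t, r)) ^ 2 + (W1 u (t, r)) ^ 2
      = (1/2) * (Gg u (r + t)) ^ 2 + (1/2) * (Hh u (r - t)) ^ 2 := by
  have hp := transport_plus hreg hwave hr htr
  have hm := transport_minus hreg hwave hr hrt
  rw [show r + t = t + r from add_comm r t, Gg_eq hreg hwave htr, Hh_eq hreg hwave hrt,
    ← hp, ← hm]
  ring

omit hwave in
lemma integrand_eq {t r : ℝ} (hr : 1 < r) :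
    (deriv (fun ρ => ρ * u t ρ) r) ^ 2 + (r * deriv (fun s => u s r) t) ^ 2
      = (W2 u (t, r)) ^ 2 + (W1 u (t, r)) ^ 2 := by
  rw [w2_eq_deriv hreg hr, ← deriv_const_mul_field r, w1_eq_deriv hreg hr]

end

/-- Exterior energy identity for radial solutions of the linear wave equation
outside the unit ball of ℝ³ with Dirichlet boundary condition: the sum over
both time directions of the limiting exterior energies
`∫_{R+|t|}^∞ (∂_r(ru))² + (∂_t(ru))² dr` equals
`∫_R^∞ (∂_r(ru₀))² + r² u₁² dr`. -/
theorem exterior_energy_linear_wave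
    (R : ℝ) (hR : 1 ≤ R)
    (u : ℝ → ℝ → ℝ) (u0 u1 : ℝ → ℝ)
    -- regularity: u is C² on the exterior region in both variables
    (hreg : ContDiffOn ℝ 2 (fun p : ℝ × ℝ => u p.1 p.2) {p : ℝ × ℝ | 1 < p.2})
    -- the wave equation (∂_t² - ∂_r²)(r u) = 0 for r > 1
    (hwave : ∀ t : ℝ, ∀ r : ℝ, 1 < r →
      deriv (fun s => deriv (fun s' => r * u s' r) s) t =
      deriv (fun ρ => deriv (fun ρ' => ρ' * u t ρ') ρ) r)
    -- Dirichlet boundary condition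
    (hbdry : ∀ t : ℝ, u t 1 = 0)
    -- initial data
    (hu0 : ∀ r : ℝ, 1 < r → u 0 r = u0 r)
    (hu1 : ∀ r : ℝ, 1 < r → deriv (fun s => u s r) 0 = u1 r)
    -- finite energy: (u0, u1) ∈ Ḣ¹₀ × L² (radial)
    (hfin1 : IntegrableOn (fun r => (deriv u0 r)^2 * r^2) (Ioi 1))
    (hfin2 : IntegrableOn (fun r => (u1 r)^2 * r^2) (Ioi 1)) :
    ∃ Lp Lm : ℝ,
      Tendsto (fun t : ℝ => ∫ r in Ioi (R + |t|),
          ((deriv (fun ρ => ρ * u t ρ) r)^2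
            + (r * deriv (fun s => u s r) t)^2)) atTop (nhds Lp) ∧
      Tendsto (fun t : ℝ => ∫ r in Ioi (R + |t|),
          ((deriv (fun ρ => ρ * u t ρ) r)^2
            + (r * deriv (fun s => u s r) t)^2)) atBot (nhds Lm) ∧
      Lp + Lm = ∫ r in Ioi R,
          ((deriv (fun ρ => ρ * u0 ρ) r)^2 + r^2 * (u1 r)^2) := by
  have habs1 : ∀ t : ℝ, R ≤ R + |t| + t := fun t => by have := neg_abs_le t; linarith
  have habs2 : ∀ t : ℝ, R ≤ R + |t| - t := fun t => by have := le_abs_self t; linarith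
  -- Step 1: rewrite the exterior integral via the characteristic profiles
  have K1 : ∀ t : ℝ, (∫ r in Ioi (R + |t|),
        ((deriv (fun ρ => ρ * u t ρ) r)^2 + (r * deriv (fun s => u s r) t)^2))
      = ∫ r in Ioi (R + |t|),
        ((1/2) * (Gg u (r + t))^2 + (1/2) * (Hh u (r - t))^2) := by
    intro t
    refine setIntegral_congr_fun measurableSet_Ioi (fun r hr => ?_)
    simp only [mem_Ioi] at hr
    have h0 : 0 ≤ |t| := abs_nonneg t
    have hr1 : 1 < r := by linarith
    have htr : 1 < t + r := by have := neg_abs_le t; linarith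
    have hrt : 1 < r - t := by have := le_abs_self t; linarith
    rw [integrand_eq hreg hr1, rep_sq hreg hwave hr1 htr hrt]
  -- Step 2: rewrite the initial energy
  have hRHSeq : (∫ r in Ioi R, ((deriv (fun ρ => ρ * u0 ρ) r)^2 + r^2 * (u1 r)^2))
      = ∫ r in Ioi R, ((1/2) * (Gg u r)^2 + (1/2) * (Hh u r)^2) := by
    refine setIntegral_congr_fun measurableSet_Ioi (fun r hr => ?_)
    simp only [mem_Ioi] at hr
    have hr1 : 1 < r := lt_of_le_of_lt hR hr
    have h2 : deriv (fun ρ => ρ * u0 ρ) r = W2 u (0, r) := by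
      rw [← w2_eq_deriv hreg hr1]
      apply Filter.EventuallyEq.deriv_eq
      filter_upwards [eventually_gt_nhds hr1] with ρ hρ
      rw [hu0 ρ hρ]
    have h1 : W1 u (0, r) = r * u1 r := by
      rw [← w1_eq_deriv hreg hr1, deriv_const_mul_field r, hu1 r hr1]
    rw [h2, Gg_eq hreg hwave hr1, Hh_eq hreg hwave hr1,
      show r^2 * (u1 r)^2 = (r * u1 r)^2 by ring, ← h1]
    ring
  by_cases hP : IntegrableOn (fun s => (Gg u s)^2) (Ioi R)
      ∧ IntegrableOn (fun s => (Hh u s)^2) (Ioi R)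
  · obtain ⟨hPg, hPh⟩ := hP
    have hsplit : ∀ t : ℝ, (∫ r in Ioi (R + |t|),
          ((1/2) * (Gg u (r + t))^2 + (1/2) * (Hh u (r - t))^2))
        = (1/2) * (∫ s in Ioi (R + |t| + t), (Gg u s)^2)
          + (1/2) * (∫ s in Ioi (R + |t| - t), (Hh u s)^2) := by
      intro t
      have hIg : IntegrableOn (fun r => (Gg u (r + t))^2) (Ioi (R + |t|)) :=
        (shift_Ioi_integrableOn (fun s => (Gg u s)^2) _ t).mpr
          (hPg.mono_set (Ioi_subset_Ioi (habs1 t)))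
      have hIh' : IntegrableOn (fun r => (Hh u (r + -t))^2) (Ioi (R + |t|)) :=
        (shift_Ioi_integrableOn (fun s => (Hh u s)^2) _ (-t)).mpr
          (hPh.mono_set (Ioi_subset_Ioi (by have := habs2 t; linarith)))
      have hIh : IntegrableOn (fun r => (Hh u (r - t))^2) (Ioi (R + |t|)) := by
        simpa [sub_eq_add_neg] using hIh'
      rw [integral_add (hIg.const_mul _) (hIh.const_mul _), integral_const_mul, integral_const_mul,
        shift_Ioi_integral (fun s => (Gg u s)^2) (R + |t|) t]
      have hs2 : (∫ r in Ioi (R + |t|), (Hh u (r - t))^2)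
          = ∫ s in Ioi (R + |t| - t), (Hh u s)^2 := by
        rw [show (fun r => (Hh u (r - t))^2) = fun r => (fun s => (Hh u s)^2) (r + -t) from
            funext fun r => by rw [sub_eq_add_neg],
          shift_Ioi_integral (fun s => (Hh u s)^2) (R + |t|) (-t),
          show R + |t| + -t = R + |t| - t by ring]
      rw [hs2]
    refine ⟨(1/2) * ∫ s in Ioi R, (Hh u s)^2, (1/2) * ∫ s in Ioi R, (Gg u s)^2, ?_, ?_, ?_⟩
    · have heq : (fun t : ℝ => ∫ r in Ioi (R + |t|),
          ((deriv (fun ρ => ρ * u t ρ) r)^2 + (r * deriv (fun s => u s r) t)^2))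
          = fun t => (1/2) * (∫ s in Ioi (R + |t| + t), (Gg u s)^2)
            + (1/2) * (∫ s in Ioi (R + |t| - t), (Hh u s)^2) :=
        funext fun t => (K1 t).trans (hsplit t)
      rw [heq]
      have htend1 : Tendsto (fun t : ℝ => R + |t| + t) atTop atTop :=
        tendsto_atTop_mono (fun t => by have := abs_nonneg t; simp only [id_eq]; linarith)
          tendsto_id
      have hT1 : Tendsto (fun t : ℝ => (1/2) * ∫ s in Ioi (R + |t| + t), (Gg u s)^2)
          atTop (nhds ((1/2) * 0)) :=
        (tendsto_tail_integral hPg htend1).const_mul _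
      have hT2 : Tendsto (fun t : ℝ => (1/2) * ∫ s in Ioi (R + |t| - t), (Hh u s)^2)
          atTop (nhds ((1/2) * ∫ s in Ioi R, (Hh u s)^2)) := by
        apply Tendsto.congr' _ tendsto_const_nhds
        filter_upwards [eventually_ge_atTop (0 : ℝ)] with t ht
        rw [abs_of_nonneg ht, show R + t - t = R by ring]
      have := hT1.add hT2
      simpa using this
    · have heq : (fun t : ℝ => ∫ r in Ioi (R + |t|),
          ((deriv (fun ρ => ρ * u t ρ) r)^2 + (r * deriv (fun s => u s r) t)^2))
          = fun t => (1/2) * (∫ s in Ioi (R + |t| + t), (Gg u s)^2)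
            + (1/2) * (∫ s in Ioi (R + |t| - t), (Hh u s)^2) :=
        funext fun t => (K1 t).trans (hsplit t)
      rw [heq]
      have htend2 : Tendsto (fun t : ℝ => R + |t| - t) atBot atTop := by
        apply tendsto_atTop_mono (fun t => ?_) tendsto_neg_atBot_atTop
        have := abs_nonneg t
        linarith
      have hT2 : Tendsto (fun t : ℝ => (1/2) * ∫ s in Ioi (R + |t| - t), (Hh u s)^2)
          atBot (nhds ((1/2) * 0)) :=
        (tendsto_tail_integral hPh htend2).const_mul _
      have hT1 : Tendsto (fun t : ℝ => (1/2) * ∫ s in Ioi (R + |t| + t), (Gg u s)^2)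
          atBot (nhds ((1/2) * ∫ s in Ioi R, (Gg u s)^2)) := by
        apply Tendsto.congr' _ tendsto_const_nhds
        filter_upwards [eventually_le_atBot (0 : ℝ)] with t ht
        rw [abs_of_nonpos ht, show R + -t + t = R by ring]
      have := hT1.add hT2
      simpa using this
    · rw [hRHSeq, integral_add (hPg.const_mul _) (hPh.const_mul _),
        integral_const_mul, integral_const_mul]
      ring
  · have hnc : ∀ (b t : ℝ), R ≤ b + t → R ≤ b - t →
        ¬ IntegrableOn (fun r => (1/2) * (Gg u (r + t))^2 + (1/2) * (Hh u (r - t))^2) (Ioi b) :=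
      fun b t h1 h2 => not_integrable_comb hR (cont_Gg hreg) (cont_Hh hreg) hP b t h1 h2
    have hzero : ∀ t : ℝ, (∫ r in Ioi (R + |t|),
        ((1/2) * (Gg u (r + t))^2 + (1/2) * (Hh u (r - t))^2)) = 0 :=
      fun t => integral_undef (hnc (R + |t|) t (habs1 t) (habs2 t))
    have hfun : (fun t : ℝ => ∫ r in Ioi (R + |t|),
        ((deriv (fun ρ => ρ * u t ρ) r)^2 + (r * deriv (fun s => u s r) t)^2))
        = fun _ => (0 : ℝ) :=
      funext fun t => (K1 t).trans (hzero t)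
    have hrhs0 : (∫ r in Ioi R, ((deriv (fun ρ => ρ * u0 ρ) r)^2 + r^2 * (u1 r)^2)) = 0 := by
      rw [hRHSeq]
      apply integral_undef
      have hnc0 := hnc R 0 (by linarith) (by linarith)
      simp only [add_zero, sub_zero] at hnc0
      exact hnc0
    exact ⟨0, 0, by rw [hfun]; exact tendsto_const_nhds,
      by rw [hfun]; exact tendsto_const_nhds, by rw [hrhs0]; ring⟩
end

section
/- Let $m > 2$ be an integer and let $Q \in \dot H^1(\{|x|>1\})$ be radial, $C^2$, satisfying $-\Delta Q = |Q|^{2m}Q$ for $|x| > 1$, with $|Q(r)| \leq C r^{-1/2}$. Then there exists $\ell \in \mathbb{R}$ such that $|Q(r) - \ell/r| \leq C' r^{-(2m-1)}$ for $r$ large; in particular $rQ(r) \to \ell$ as $r \to \infty$. -/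
open MeasureTheory Real Set Filter

lemma key_decay {f : ℝ → ℝ} {K p : ℝ} (hp : 1 < p) (hK : 0 ≤ K)
    (hdiff : ∀ r : ℝ, 2 ≤ r → DifferentiableAt ℝ f r)
    (hcont : ContinuousOn (deriv f) (Ici 2))
    (hbound : ∀ r : ℝ, 2 ≤ r → |deriv f r| ≤ K * r ^ (-p)) :
    ∃ L : ℝ, Tendsto f atTop (nhds L) ∧
      ∀ r : ℝ, 2 ≤ r → |f r - L| ≤ (K / (p - 1)) * r ^ (-(p - 1)) := by
  have hmaj : IntegrableOn (fun x : ℝ => K * x ^ (-p)) (Ioi 2) := by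
    exact (integrableOn_Ioi_rpow_of_lt (by linarith) (by norm_num)).const_mul K
  have hint : IntegrableOn (deriv f) (Ioi 2) := by
    refine Integrable.mono' hmaj
      ((hcont.mono (Ioi_subset_Ici le_rfl)).aestronglyMeasurable measurableSet_Ioi) ?_
    filter_upwards [ae_restrict_mem measurableSet_Ioi] with x hx
    exact hbound x (le_of_lt hx)
  have hftc : ∀ a b : ℝ, 2 ≤ a → a ≤ b → ∫ x in a..b, deriv f x = f b - f a := by
    intro a b ha hab
    refine intervalIntegral.integral_deriv_eq_sub (fun x hx => ?_) ?_
    · rw [uIcc_of_le hab] at hx; exact hdiff x (le_trans ha hx.1)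
    · rw [intervalIntegrable_iff_integrableOn_Ioc_of_le hab]
      exact hint.mono_set (fun x hx => lt_of_le_of_lt ha hx.1)
  set L : ℝ := f 2 + ∫ x in Ioi 2, deriv f x with hL
  have htend : Tendsto f atTop (nhds L) := by
    have h1 : Tendsto (fun b => f 2 + ∫ x in (2:ℝ)..b, deriv f x) atTop (nhds L) :=
      tendsto_const_nhds.add (intervalIntegral_tendsto_integral_Ioi 2 hint tendsto_id)
    refine h1.congr' ?_
    filter_upwards [eventually_ge_atTop 2] with b hb
    rw [hftc 2 b le_rfl hb]; ring
  refine ⟨L, htend, fun r hr => ?_⟩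
  have hr0 : (0:ℝ) < r := by linarith
  have hbd : ∀ s : ℝ, r ≤ s → |f s - f r| ≤ (K / (p - 1)) * r ^ (-(p - 1)) := by
    intro s hs
    rw [← hftc r s hr hs]
    have hii : IntervalIntegrable (fun x : ℝ => K * x ^ (-p)) volume r s := by
      rw [intervalIntegrable_iff_integrableOn_Ioc_of_le hs]
      exact hmaj.mono_set (fun x hx => lt_of_le_of_lt hr hx.1)
    have h1 : ‖∫ x in r..s, deriv f x‖ ≤ |∫ x in r..s, K * x ^ (-p)| := by
      refine (intervalIntegral.norm_integral_le_of_norm_le hs ?_ hii).trans (le_abs_self _)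
      filter_upwards with x hx
      exact hbound x (le_trans hr (le_of_lt hx.1))
    rw [Real.norm_eq_abs] at h1
    have h2 : ∫ x in r..s, K * x ^ (-p) = K * ((s ^ (-p+1) - r ^ (-p+1)) / (-p+1)) := by
      rw [intervalIntegral.integral_const_mul, integral_rpow]
      right
      refine ⟨fun h => by linarith, ?_⟩
      rw [uIcc_of_le hs]
      rintro ⟨h0, -⟩; linarith
    have hs0 : (0:ℝ) < s := lt_of_lt_of_le hr0 hs
    have h3 : (0:ℝ) ≤ s ^ (-p+1) := rpow_nonneg hs0.le _
    have h4 : (0:ℝ) < r ^ (-p+1) := rpow_pos_of_pos hr0 _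
    have h5 : s ^ (-p+1) ≤ r ^ (-p+1) :=
      rpow_le_rpow_of_nonpos hr0 hs (by linarith)
    have h6 : |s ^ (-p+1) - r ^ (-p+1)| ≤ r ^ (-p+1) := by
      rw [abs_le]; constructor <;> linarith
    have hep : -(p-1) = -p+1 := by ring
    calc |∫ x in r..s, deriv f x| ≤ |∫ x in r..s, K * x ^ (-p)| := h1
      _ = K * (|s ^ (-p+1) - r ^ (-p+1)| / (p-1)) := by
          rw [h2, abs_mul, abs_of_nonneg hK, abs_div, abs_of_neg (by linarith : -p+1 < 0)]
          ring_nf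
      _ ≤ K * (r ^ (-p+1) / (p-1)) := by
          gcongr <;> linarith
      _ = (K / (p - 1)) * r ^ (-(p-1)) := by rw [hep]; ring
  have hgoal : Tendsto (fun s => |f s - f r|) atTop (nhds |L - f r|) :=
    (htend.sub tendsto_const_nhds).abs
  rw [abs_sub_comm]
  refine le_of_tendsto hgoal ?_
  filter_upwards [eventually_ge_atTop r] with s hs using hbd s hs

lemma lim_zero_of_sq_integrable {g : ℝ → ℝ} {L : ℝ}
    (hg : IntegrableOn (fun r => (g r)^2) (Ioi 1) volume)
    (hL : Tendsto g atTop (nhds L)) : L = 0 := by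
  by_contra h
  have hL2 : Tendsto (fun r => (g r)^2) atTop (nhds (L^2)) := hL.pow 2
  have hpos : 0 < L^2 := by positivity
  have hev : ∀ᶠ r in atTop, L^2/2 ≤ (g r)^2 :=
    hL2.eventually (eventually_ge_nhds (by linarith))
  obtain ⟨T, hT⟩ := hev.exists_forall_of_atTop
  set T' : ℝ := max T 2 with hT'
  have hTle : ∀ r ∈ Ioi T', L^2/2 ≤ (g r)^2 := fun r hr =>
    hT r (le_of_lt (lt_of_le_of_lt (le_max_left T 2) hr))
  have hci : IntegrableOn (fun _ : ℝ => L^2/2) (Ioi T') volume := by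
    refine Integrable.mono' (hg.mono_set (fun x hx => ?_)) aestronglyMeasurable_const ?_
    · exact lt_of_lt_of_le (by norm_num : (1:ℝ) < 2) (le_trans (le_max_right T 2) (le_of_lt hx))
    · filter_upwards [ae_restrict_mem measurableSet_Ioi] with x hx
      rw [Real.norm_eq_abs, abs_of_nonneg (by positivity)]
      exact hTle x hx
  rw [integrableOn_const_iff] at hci
  rcases hci with h1 | h1
  · have : L^2 = 0 := by simpa using h1
    exact h (by nlinarith [sq_nonneg L])
  · simp [Real.volume_Ioi] at h1
/-- Asymptotics of finite-energy radial stationary solutions: if `Q` is a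
radial C² solution of `-ΔQ = |Q|^{2m} Q` on `{|x|>1}` with the radial Sobolev
bound `|Q(r)| ≤ C r^{-1/2}` and finite exterior energy, then there is
`ℓ ∈ ℝ` with `|Q(r) - ℓ/r| ≤ C' r^{-(2m-1)}` for large `r`; in particular
`r Q(r) → ℓ` as `r → ∞`. -/
theorem stationary_solution_asymptotics
    (m : ℕ) (hm : 2 < m) (Q : ℝ → ℝ)
    (hreg : ContDiffOn ℝ 2 Q (Ioi 1))
    (heq : ∀ r : ℝ, 1 < r →
      deriv (deriv Q) r + (2 / r) * deriv Q r + |Q r| ^ (2 * m) * Q r = 0)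
    (C : ℝ) (hC : 0 < C)
    (hbound : ∀ r : ℝ, 1 ≤ r → |Q r| ≤ C * r ^ (-(1:ℝ)/2))
    (henergy : IntegrableOn (fun r => (deriv (fun ρ => ρ * Q ρ) r)^2) (Ioi 1)) :
    ∃ ℓ : ℝ, ∃ C' : ℝ, ∃ R0 : ℝ, 1 < R0 ∧
      (∀ r : ℝ, R0 ≤ r → |Q r - ℓ / r| ≤ C' / r ^ (2 * m - 1)) ∧
      Tendsto (fun r => r * Q r) atTop (nhds ℓ) := by
  set u : ℝ → ℝ := fun ρ => ρ * Q ρ with hu_def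
  have hmR : (3:ℝ) ≤ (m:ℝ) := by exact_mod_cast hm
  -- basic differentiability facts
  have hQd : ∀ r : ℝ, 1 < r → DifferentiableAt ℝ Q r := fun r hr =>
    (hreg.differentiableOn (by norm_num)).differentiableAt (isOpen_Ioi.mem_nhds hr)
  have hC1 : ContDiffOn ℝ 1 (deriv Q) (Ioi 1) :=
    hreg.deriv_of_isOpen isOpen_Ioi (by norm_num)
  have hQd2 : ∀ r : ℝ, 1 < r → DifferentiableAt ℝ (deriv Q) r := fun r hr =>
    (hC1.differentiableOn one_ne_zero).differentiableAt (isOpen_Ioi.mem_nhds hr)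
  have hQc : ContinuousOn Q (Ioi 1) := hreg.continuousOn
  have hQ'c : ContinuousOn (deriv Q) (Ioi 1) := hC1.continuousOn
  -- derivative of u
  have huD : ∀ r : ℝ, 1 < r → HasDerivAt u (1 * Q r + r * deriv Q r) r := fun r hr =>
    (hasDerivAt_id r).mul ((hQd r hr).hasDerivAt)
  have hudiff : ∀ r : ℝ, 1 < r → DifferentiableAt ℝ u r := fun r hr =>
    (huD r hr).differentiableAt
  have hu' : ∀ r : ℝ, 1 < r → deriv u r = Q r + r * deriv Q r := by
    intro r hr
    rw [(huD r hr).deriv]; ring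
  -- second derivative of u
  set v : ℝ → ℝ := fun x => Q x + x * deriv Q x with hv_def
  have hvD : ∀ r : ℝ, 1 < r →
      HasDerivAt v (deriv Q r + (1 * deriv Q r + r * deriv (deriv Q) r)) r := fun r hr =>
    ((hQd r hr).hasDerivAt).add ((hasDerivAt_id r).mul ((hQd2 r hr).hasDerivAt))
  have hev : ∀ r : ℝ, 1 < r → deriv u =ᶠ[nhds r] v := by
    intro r hr
    filter_upwards [isOpen_Ioi.mem_nhds hr] with x hx using hu' x hx
  have hu'd : ∀ r : ℝ, 1 < r → DifferentiableAt ℝ (deriv u) r := fun r hr =>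
    (hvD r hr).differentiableAt.congr_of_eventuallyEq (hev r hr)
  have hu'' : ∀ r : ℝ, 1 < r →
      deriv (deriv u) r = -(r * (|Q r| ^ (2*m) * Q r)) := by
    intro r hr
    have hrne : r ≠ 0 := by linarith
    rw [(hev r hr).deriv_eq, (hvD r hr).deriv]
    have h3 := heq r hr
    have h4 : r * deriv (deriv Q) r + 2 * deriv Q r + r * (|Q r| ^ (2*m) * Q r) = 0 := by
      have := congrArg (fun z => r * z) h3
      field_simp at this
      linarith
    linarith
  -- continuity on Ici 2
  have hsub : Ici (2:ℝ) ⊆ Ioi 1 := fun x hx => show (1:ℝ) < x from lt_of_lt_of_le one_lt_two hx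
  have hu'cont : ContinuousOn (deriv u) (Ici 2) := by
    refine ((hQc.add (continuousOn_id.mul hQ'c)).mono hsub).congr ?_
    intro x hx; exact hu' x (hsub hx)
  have hu''cont : ContinuousOn (deriv (deriv u)) (Ici 2) := by
    have hw : ContinuousOn (fun x : ℝ => -(x * (|Q x| ^ (2*m) * Q x))) (Ioi 1) :=
      (continuousOn_id.mul ((hQc.abs.pow _).mul hQc)).neg
    refine (hw.mono hsub).congr ?_
    intro x hx; exact hu'' x (hsub hx)
  -- generic bound for u''
  have hbgen : ∀ B c : ℝ, 0 ≤ B → ∀ r : ℝ, 2 ≤ r → |Q r| ≤ B * r ^ c →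
      |deriv (deriv u) r| ≤ B ^ (2*m+1) * r ^ (1 + c * (2*(m:ℝ)+1)) := by
    intro B c hB r hr hQb
    have hr1 : (1:ℝ) < r := by linarith
    have hr0 : (0:ℝ) < r := by linarith
    have h1 : |deriv (deriv u) r| = r * |Q r| ^ (2*m+1) := by
      rw [hu'' r hr1, abs_neg, abs_mul, abs_mul, abs_pow, abs_abs,
        abs_of_pos hr0, pow_succ]
      try ring
    rw [h1]
    have h2 : |Q r| ^ (2*m+1) ≤ (B * r ^ c) ^ (2*m+1) :=
      pow_le_pow_left₀ (abs_nonneg _) hQb _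
    have h3 : (B * r ^ c) ^ (2*m+1) = B ^ (2*m+1) * r ^ (c * (2*(m:ℝ)+1)) := by
      rw [mul_pow, ← rpow_natCast (r ^ c) (2*m+1), ← rpow_mul hr0.le]
      push_cast
      try ring_nf
    have h4 : r * (B ^ (2*m+1) * r ^ (c * (2*(m:ℝ)+1)))
        = B ^ (2*m+1) * r ^ (1 + c * (2*(m:ℝ)+1)) := by
      rw [rpow_add hr0, rpow_one]; ring
    calc r * |Q r| ^ (2*m+1) ≤ r * (B ^ (2*m+1) * r ^ (c * (2*(m:ℝ)+1))) := by
          rw [← h3]; exact mul_le_mul_of_nonneg_left h2 hr0.le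
      _ = B ^ (2*m+1) * r ^ (1 + c * (2*(m:ℝ)+1)) := h4
  -- Step 1 : first decay bound on u''
  have e1 : (1:ℝ) < (2*(m:ℝ)-1)/2 := by linarith
  have hb1 : ∀ r : ℝ, 2 ≤ r →
      |deriv (deriv u) r| ≤ C ^ (2*m+1) * r ^ (-((2*(m:ℝ)-1)/2)) := by
    intro r hr
    have := hbgen C (-(1:ℝ)/2) hC.le r hr (hbound r (by linarith))
    rwa [show (1:ℝ) + (-(1:ℝ)/2) * (2*(m:ℝ)+1) = -((2*(m:ℝ)-1)/2) by ring] at this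
  obtain ⟨L1, hL1tend, hL1bd⟩ := key_decay e1 (by positivity)
    (fun r hr => hu'd r (by linarith)) hu''cont hb1
  have hL1zero : L1 = 0 := lim_zero_of_sq_integrable henergy hL1tend
  rw [hL1zero] at hL1bd hL1tend
  simp only [sub_zero] at hL1bd
  -- Step 2 : limit of u
  have e2 : (1:ℝ) < (2*(m:ℝ)-1)/2 - 1 := by linarith
  have hK2 : (0:ℝ) ≤ C ^ (2*m+1) / ((2*(m:ℝ)-1)/2 - 1) :=
    le_of_lt (div_pos (by positivity) (by linarith))
  obtain ⟨ℓ, hℓtend, hℓbd⟩ := key_decay e2 hK2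
    (fun r hr => hudiff r (by linarith)) hu'cont hL1bd
  -- uniform bound |Q r| ≤ M0 / r for r ≥ 2
  have hK3 : (0:ℝ) < C ^ (2*m+1) / ((2*(m:ℝ)-1)/2 - 1) / ((2*(m:ℝ)-1)/2 - 1 - 1) :=
    div_pos (div_pos (by positivity) (by linarith)) (by linarith)
  set K3 : ℝ := C ^ (2*m+1) / ((2*(m:ℝ)-1)/2 - 1) / ((2*(m:ℝ)-1)/2 - 1 - 1) with hK3def
  set M0 : ℝ := |ℓ| + K3 with hM0
  have hM0pos : 0 < M0 := by rw [hM0]; positivity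
  have hQM : ∀ r : ℝ, 2 ≤ r → |Q r| ≤ M0 * r ^ (-(1:ℝ)) := by
    intro r hr
    have hr0 : (0:ℝ) < r := by linarith
    have h1 : |u r - ℓ| ≤ K3 * r ^ (-((2*(m:ℝ)-1)/2 - 1 - 1)) := hℓbd r hr
    have h2 : r ^ (-((2*(m:ℝ)-1)/2 - 1 - 1)) ≤ 1 :=
      rpow_le_one_of_one_le_of_nonpos (by linarith) (by linarith)
    have h3 : |u r| ≤ M0 := by
      have h6 := abs_sub_abs_le_abs_sub (u r) ℓ
      have h4 : K3 * r ^ (-((2*(m:ℝ)-1)/2 - 1 - 1)) ≤ K3 := by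
        nth_rewrite 2 [← mul_one K3]
        exact mul_le_mul_of_nonneg_left h2 hK3.le
      rw [hM0]; linarith
    have h5 : |Q r| = |u r| / r := by
      rw [hu_def]
      simp only [abs_mul, abs_of_pos hr0]
      field_simp
    rw [h5, rpow_neg_one]
    rw [div_le_iff₀ hr0, mul_assoc, inv_mul_cancel₀ (ne_of_gt hr0), mul_one]
    exact h3
  -- Step 3 : bootstrap for u''
  have e3 : (1:ℝ) < 2*(m:ℝ) := by linarith
  have hb3 : ∀ r : ℝ, 2 ≤ r →
      |deriv (deriv u) r| ≤ M0 ^ (2*m+1) * r ^ (-(2*(m:ℝ))) := by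
    intro r hr
    have := hbgen M0 (-(1:ℝ)) hM0pos.le r hr (hQM r hr)
    rwa [show (1:ℝ) + (-(1:ℝ)) * (2*(m:ℝ)+1) = -(2*(m:ℝ)) by ring] at this
  obtain ⟨L1', hL1'tend, hL1'bd⟩ := key_decay e3 (by positivity)
    (fun r hr => hu'd r (by linarith)) hu''cont hb3
  have hzero' : L1' = 0 := tendsto_nhds_unique hL1'tend hL1tend
  rw [hzero'] at hL1'bd
  simp only [sub_zero] at hL1'bd
  -- Step 4 : improved limit of u
  have e4 : (1:ℝ) < 2*(m:ℝ) - 1 := by linarith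
  have hK4 : (0:ℝ) ≤ M0 ^ (2*m+1) / (2*(m:ℝ) - 1) :=
    le_of_lt (div_pos (by positivity) (by linarith))
  obtain ⟨ℓ', hℓ'tend, hℓ'bd⟩ := key_decay e4 hK4
    (fun r hr => hudiff r (by linarith)) hu'cont hL1'bd
  have hℓℓ' : ℓ' = ℓ := tendsto_nhds_unique hℓ'tend hℓtend
  rw [hℓℓ'] at hℓ'bd
  -- conclusion
  refine ⟨ℓ, M0 ^ (2*m+1) / (2*(m:ℝ) - 1) / (2*(m:ℝ) - 1 - 1), 2, one_lt_two,
    fun r hr => ?_, hℓtend⟩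
  have hr0 : (0:ℝ) < r := by linarith
  have h1 : |u r - ℓ| ≤ M0 ^ (2*m+1) / (2*(m:ℝ) - 1) / (2*(m:ℝ) - 1 - 1)
      * r ^ (-(2*(m:ℝ) - 1 - 1)) := hℓ'bd r hr
  have h2 : |Q r - ℓ / r| = |u r - ℓ| / r := by
    rw [hu_def]
    rw [show Q r - ℓ / r = (r * Q r - ℓ) / r by field_simp]
    rw [abs_div, abs_of_pos hr0]
  rw [h2]
  have hcast : ((2*m - 1 : ℕ) : ℝ) = 2*(m:ℝ) - 1 := by
    have h0 : 1 ≤ 2*m := by omega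
    push_cast [h0]; ring
  have h3 : (r : ℝ) ^ (2*m-1 : ℕ) = r ^ (2*(m:ℝ) - 1) := by
    rw [← rpow_natCast r (2*m-1), hcast]
  rw [div_le_div_iff₀ hr0 (by rw [h3]; positivity)]
  calc |u r - ℓ| * r ^ (2*m-1:ℕ)
      ≤ (M0 ^ (2*m+1) / (2*(m:ℝ) - 1) / (2*(m:ℝ) - 1 - 1)
          * r ^ (-(2*(m:ℝ) - 1 - 1))) * r ^ (2*(m:ℝ) - 1) := by
        rw [h3]; exact mul_le_mul_of_nonneg_right h1 (by positivity)
    _ = M0 ^ (2*m+1) / (2*(m:ℝ) - 1) / (2*(m:ℝ) - 1 - 1) * r := by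
        rw [mul_assoc, ← rpow_add hr0,
          show -(2*(m:ℝ) - 1 - 1) + (2*(m:ℝ) - 1) = 1 by ring, rpow_one]
end

section
/- Let $m > 2$ be an integer. Suppose $Q$ and $Y$ are two radial $C^2$ solutions of $-\Delta u = |u|^{2m}u$ on $\{|x|>1\}$ such that $|Q(r)| + |Y(r)| \leq C/r$ for all $r \geq 1$ and $\lim_{r\to\infty} r(Q(r)-Y(r)) = 0$ with $|r Q(r) - r Y(r)| \leq C r^{-(2m-2)}$ for large $r$. Then $Q \equiv Y$ on $\{r > 1\}$. -/
open Real Set Filter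

lemma aux_pow_lip (n : ℕ) (a b : ℝ) :
    |a ^ n - b ^ n| ≤ n * max |a| |b| ^ (n - 1) * |a - b| := by
  induction n with
  | zero => simp
  | succ n ih =>
    set M := max |a| |b| with hM
    have hM0 : 0 ≤ M := le_trans (abs_nonneg a) (le_max_left _ _)
    have haM : |a| ≤ M := le_max_left _ _
    have hbM : |b| ≤ M := le_max_right _ _
    have key : a ^ (n+1) - b ^ (n+1) = a ^ n * (a - b) + (a ^ n - b ^ n) * b := by ring
    have h1 : |a ^ (n+1) - b ^ (n+1)| ≤ |a| ^ n * |a - b| + |a ^ n - b ^ n| * |b| := by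
      rw [key]
      refine (abs_add_le _ _).trans ?_
      rw [abs_mul, abs_mul, abs_pow]
    have h2 : |a| ^ n * |a - b| ≤ M ^ n * |a - b| :=
      mul_le_mul_of_nonneg_right (pow_le_pow_left₀ (abs_nonneg a) haM n) (abs_nonneg _)
    have h3 : |a ^ n - b ^ n| * |b| ≤ ((n : ℝ) * M ^ (n - 1) * |a - b|) * M :=
      mul_le_mul ih hbM (abs_nonneg b)
        (mul_nonneg (mul_nonneg (Nat.cast_nonneg n) (pow_nonneg hM0 _)) (abs_nonneg _))
    have h4 : (n : ℝ) * M ^ (n - 1) * |a - b| * M = n * M ^ n * |a - b| := by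
      rcases Nat.eq_zero_or_pos n with h | h
      · subst h; simp
      · have e : M ^ (n - 1) * M = M ^ n := by
          rw [← pow_succ, Nat.sub_add_cancel h]
        calc (n : ℝ) * M ^ (n - 1) * |a - b| * M = n * (M ^ (n-1) * M) * |a - b| := by ring
          _ = n * M ^ n * |a - b| := by rw [e]
    calc |a ^ (n+1) - b ^ (n+1)| ≤ M ^ n * |a - b| + n * M ^ n * |a - b| := by
          rw [← h4]; linarith
      _ = (n + 1 : ℕ) * M ^ n * |a - b| := by push_cast; ring
      _ = (n + 1 : ℕ) * M ^ ((n+1) - 1) * |a - b| := by norm_num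

lemma aux_convex_nonneg (f : ℝ → ℝ) (R : ℝ)
    (hconv : ConvexOn ℝ (Ici R) f) (hlim : Tendsto f atTop (nhds 0)) :
    ∀ t, R ≤ t → 0 ≤ f t := by
  have anti : ∀ t0 t1, R ≤ t0 → t0 ≤ t1 → f t1 ≤ f t0 := by
    intro t0 t1 h0 h01
    rcases eq_or_lt_of_le h01 with rfl | h01
    · exact le_refl _
    have hψ : Tendsto (fun t : ℝ => (t1 - t0) * (t - t0)⁻¹) atTop (nhds 0) := by
      rw [show (0:ℝ) = (t1 - t0) * 0 by ring]
      exact Tendsto.const_mul _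
        (Tendsto.inv_tendsto_atTop (tendsto_atTop_add_const_right atTop (-t0) tendsto_id))
    have hφ : Tendsto
        (fun t : ℝ => (1 - (t1 - t0) * (t - t0)⁻¹) * f t0 + ((t1 - t0) * (t - t0)⁻¹) * f t)
        atTop (nhds (f t0)) := by
      have h1 : Tendsto (fun t : ℝ => (1 - (t1 - t0) * (t - t0)⁻¹) * f t0) atTop
          (nhds ((1 - 0) * f t0)) := (Tendsto.const_sub _ hψ).mul_const _
      have h2 : Tendsto (fun t : ℝ => ((t1 - t0) * (t - t0)⁻¹) * f t) atTop
          (nhds (0 * 0)) := hψ.mul hlim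
      have := h1.add h2
      simpa using this
    refine ge_of_tendsto hφ ?_
    filter_upwards [eventually_gt_atTop t1] with t ht
    have ht0 : t0 < t := lt_trans h01 ht
    have hne : t - t0 ≠ 0 := by linarith [sub_pos.mpr ht0]
    have ha : (0:ℝ) ≤ 1 - (t1 - t0) * (t - t0)⁻¹ := by
      rw [sub_nonneg, ← div_eq_mul_inv, div_le_one (by linarith)]
      linarith
    have hb : (0:ℝ) ≤ (t1 - t0) * (t - t0)⁻¹ := by
      apply mul_nonneg (by linarith)
      exact inv_nonneg.mpr (by linarith)
    have hsum : (1 - (t1 - t0) * (t - t0)⁻¹) + (t1 - t0) * (t - t0)⁻¹ = 1 := by ring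
    have hcomb : (1 - (t1 - t0) * (t - t0)⁻¹) • t0 + ((t1 - t0) * (t - t0)⁻¹) • t = t1 := by
      simp only [smul_eq_mul]
      field_simp
      ring
    have := hconv.2 (mem_Ici.mpr h0) (mem_Ici.mpr (le_of_lt (lt_of_le_of_lt h0 (lt_trans h01 ht))))
      ha hb hsum
    rw [hcomb] at this
    simpa [smul_eq_mul] using this
  intro t ht
  refine le_of_tendsto hlim ?_
  filter_upwards [eventually_ge_atTop t] with s hs
  exact anti t s ht hs

lemma aux_decay (f : ℝ → ℝ)
    (hd1 : ∀ t : ℝ, 1 < t → DifferentiableAt ℝ f t)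
    (hd2 : ∀ t : ℝ, 1 < t → DifferentiableAt ℝ (deriv f) t)
    (R B : ℝ) (hR : 1 < R) (hB : 0 ≤ B) (j : ℕ) (hj : 1 ≤ j)
    (hbd : ∀ t : ℝ, R ≤ t → |deriv (deriv f) t| ≤ B / t ^ (j + 2))
    (hlim : Tendsto f atTop (nhds 0)) :
    ∀ t : ℝ, R ≤ t → |f t| ≤ (B / (((j : ℝ) + 1) * j)) / t ^ j := by
  set c : ℝ := B / (((j : ℝ) + 1) * j) with hc_def
  have hjR : (1:ℝ) ≤ (j:ℝ) := by exact_mod_cast hj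
  have hden : (0:ℝ) < ((j:ℝ) + 1) * j := by positivity
  have hc : 0 ≤ c := div_nonneg hB hden.le
  have hcB : c * ((j:ℝ) * ((j:ℝ) + 1)) = B := by
    rw [hc_def, div_mul_eq_mul_div, div_eq_iff hden.ne']; ring
  have key : ∀ g : ℝ → ℝ, (∀ t : ℝ, 1 < t → DifferentiableAt ℝ g t) →
      (∀ t : ℝ, 1 < t → DifferentiableAt ℝ (deriv g) t) →
      (∀ t : ℝ, R ≤ t → deriv (deriv g) t ≤ B / t ^ (j + 2)) →
      Tendsto g atTop (nhds 0) →
      ∀ t : ℝ, R ≤ t → g t ≤ c / t ^ j := by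
    intro g hg1 hg2 hgbd hglim t ht
    set u : ℝ → ℝ := fun s => c * s ^ (-(j:ℤ)) - g s with hu_def
    -- first derivative of u on (1, ∞)
    have hu1 : ∀ s : ℝ, 1 < s →
        HasDerivAt u (c * ((-(j:ℝ)) * s ^ (-(j:ℤ) - 1)) - deriv g s) s := by
      intro s hs
      have hs0 : s ≠ 0 := by positivity
      have h := (((hasDerivAt_zpow (-(j:ℤ)) s (Or.inl hs0))).const_mul c).sub
        (hg1 s hs).hasDerivAt
      convert h using 2
      · rfl
      · rfl
      · rfl
      push_cast
      ring
    have hu1' : ∀ s : ℝ, 1 < s →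
        deriv u s = c * ((-(j:ℝ)) * s ^ (-(j:ℤ) - 1)) - deriv g s := fun s hs =>
      (hu1 s hs).deriv
    -- second derivative
    have hu2 : ∀ s : ℝ, 1 < s →
        deriv (deriv u) s
          = c * ((-(j:ℝ)) * ((-(j:ℝ) - 1) * s ^ (-(j:ℤ) - 1 - 1))) - deriv (deriv g) s := by
      intro s hs
      have hev : deriv u =ᶠ[nhds s]
          (fun s => c * ((-(j:ℝ)) * s ^ (-(j:ℤ) - 1)) - deriv g s) := by
        filter_upwards [isOpen_Ioi.mem_nhds (show s ∈ Ioi 1 from hs)] with x hx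
        exact hu1' x hx
      rw [hev.deriv_eq]
      have hs0 : s ≠ 0 := by positivity
      have hder : HasDerivAt (fun s : ℝ => c * ((-(j:ℝ)) * s ^ (-(j:ℤ) - 1)) - deriv g s)
          (c * ((-(j:ℝ)) * ((-(j:ℝ) - 1) * s ^ (-(j:ℤ) - 1 - 1))) - deriv (deriv g) s) s := by
        have h := (((hasDerivAt_zpow (-(j:ℤ) - 1) s (Or.inl hs0)).const_mul
          ((-(j:ℝ)))).const_mul c).sub (hg2 s hs).hasDerivAt
        convert h using 2
        · rfl
        · rfl
        · rfl
        push_cast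
        ring
      rw [hder.deriv]
    -- u is convex on Ici R
    have hzpow_eq : ∀ s : ℝ, 0 < s → (s : ℝ) ^ (-(j:ℤ) - 2) = (s ^ (j + 2))⁻¹ := by
      intro s hs
      rw [show -(j:ℤ) - 2 = -((j + 2 : ℕ) : ℤ) by push_cast; ring, zpow_neg, zpow_natCast]
    have hnn : ∀ s : ℝ, R < s → 0 ≤ deriv (deriv u) s := by
      intro s hs
      have hs1 : 1 < s := lt_trans hR hs
      have hs0 : (0:ℝ) < s := by linarith
      rw [hu2 s hs1]
      have h1 : c * ((-(j:ℝ)) * ((-(j:ℝ) - 1) * s ^ (-(j:ℤ) - 1 - 1))) = B / s ^ (j + 2) := by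
        rw [show (-(j:ℤ) - 1 - 1) = -(j:ℤ) - 2 by ring, hzpow_eq s hs0, div_eq_mul_inv, ← hcB]
        push_cast
        ring
      rw [h1, sub_nonneg]
      exact hgbd s hs.le
    have hconv : ConvexOn ℝ (Ici R) u := by
      apply convexOn_of_deriv2_nonneg (convex_Ici R)
      · intro s hs
        have hs1 : 1 < s := lt_of_lt_of_le hR hs
        exact ((hu1 s hs1).differentiableAt.continuousAt).continuousWithinAt
      · rw [interior_Ici]
        intro s hs
        exact ((hu1 s (lt_trans hR hs)).differentiableAt).differentiableWithinAt
      · rw [interior_Ici]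
        intro s hs
        have hs1 : 1 < s := lt_trans hR hs
        have hev : (fun s => c * ((-(j:ℝ)) * s ^ (-(j:ℤ) - 1)) - deriv g s) =ᶠ[nhds s]
            deriv u := by
          filter_upwards [isOpen_Ioi.mem_nhds (show s ∈ Ioi 1 from hs1)] with x hx
          exact (hu1' x hx).symm
        have hs0 : s ≠ 0 := by positivity
        have hdf : DifferentiableAt ℝ
            (fun s : ℝ => c * ((-(j:ℝ)) * s ^ (-(j:ℤ) - 1)) - deriv g s) s :=
          ((((hasDerivAt_zpow (-(j:ℤ) - 1) s (Or.inl hs0)).const_mul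
            ((-(j:ℝ)))).const_mul c).sub (hg2 s hs1).hasDerivAt).differentiableAt
        exact (hdf.congr_of_eventuallyEq hev.symm).differentiableWithinAt
      · rw [interior_Ici]
        intro s hs
        have : deriv^[2] u s = deriv (deriv u) s := by
          simp [Function.iterate_succ, Function.iterate_one]
        rw [this]
        exact hnn s hs
    have hulim : Tendsto u atTop (nhds 0) := by
      have h1 : Tendsto (fun s : ℝ => c * s ^ (-(j:ℤ))) atTop (nhds 0) := by
        exact tendsto_const_mul_zpow_atTop_zero (𝕜 := ℝ) (n := -(j:ℤ)) (c := c) (by omega)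
      have h2 := h1.sub hglim
      rw [sub_zero] at h2
      exact h2
    have h0 := aux_convex_nonneg u R hconv hulim t ht
    have ht0 : (0:ℝ) < t := by linarith
    have : c * t ^ (-(j:ℤ)) = c / t ^ j := by
      rw [show -(j:ℤ) = -((j:ℕ):ℤ) by norm_num, zpow_neg, zpow_natCast, div_eq_mul_inv]
    rw [hu_def] at h0
    simp only [sub_nonneg] at h0
    rw [this] at h0
    exact h0
  intro t ht
  have h1 := key f hd1 hd2 (fun s hs => (le_abs_self _).trans (hbd s hs)) hlim t ht
  have h2 := key (fun s => -f s) (fun s hs => (hd1 s hs).neg)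
    (fun s hs => by
      have : deriv (fun s => -f s) = fun s => -deriv f s := by
        funext x; exact deriv.neg
      rw [this]; exact (hd2 s hs).neg)
    (fun s hs => by
      have h3 : deriv (fun s => -f s) = fun s => -deriv f s := by
        funext x; exact deriv.neg
      rw [h3]
      have h4 : deriv (fun s => -deriv f s) s = -(deriv (deriv f) s) := deriv.neg
      rw [h4]
      exact (neg_le_abs _).trans (hbd s hs))
    (by simpa using hlim.neg) t ht
  rw [abs_le]
  constructor
  · linarith
  · exact h1

set_option maxHeartbeats 1600000 in
/-- Uniqueness from asymptotics: two radial C² solutions of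
`-Δu = |u|^{2m} u` on `{|x|>1}` which both decay like `1/r` and whose
difference satisfies `|r(Q(r) - Y(r))| ≤ C r^{-(2m-2)}` with
`r(Q(r)-Y(r)) → 0` must coincide on `{r > 1}`. -/
theorem stationary_solution_uniqueness
    (m : ℕ) (hm : 2 < m) (Q Y : ℝ → ℝ)
    (hregQ : ContDiffOn ℝ 2 Q (Ioi 1)) (hregY : ContDiffOn ℝ 2 Y (Ioi 1))
    (heqQ : ∀ r : ℝ, 1 < r →
      deriv (deriv Q) r + (2 / r) * deriv Q r + |Q r| ^ (2 * m) * Q r = 0)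
    (heqY : ∀ r : ℝ, 1 < r →
      deriv (deriv Y) r + (2 / r) * deriv Y r + |Y r| ^ (2 * m) * Y r = 0)
    (C : ℝ) (hC : 0 < C)
    (hbound : ∀ r : ℝ, 1 ≤ r → |Q r| + |Y r| ≤ C / r)
    (hlim : Tendsto (fun r => r * (Q r - Y r)) atTop (nhds 0))
    (R0 : ℝ) (hR0 : 1 < R0)
    (hdiff : ∀ r : ℝ, R0 ≤ r →
      |r * Q r - r * Y r| ≤ C / r ^ (2 * m - 2)) :
    ∀ r : ℝ, 1 < r → Q r = Y r := by
  -- basic differentiability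
  have hQd : ∀ r : ℝ, 1 < r → DifferentiableAt ℝ Q r := fun r hr =>
    (hregQ.differentiableOn (by norm_num)).differentiableAt (isOpen_Ioi.mem_nhds hr)
  have hYd : ∀ r : ℝ, 1 < r → DifferentiableAt ℝ Y r := fun r hr =>
    (hregY.differentiableOn (by norm_num)).differentiableAt (isOpen_Ioi.mem_nhds hr)
  have hQd2 : ∀ r : ℝ, 1 < r → DifferentiableAt ℝ (deriv Q) r := fun r hr =>
    ((hregQ.deriv_of_isOpen (m := 1) isOpen_Ioi (by norm_num)).differentiableOn
      one_ne_zero).differentiableAt (isOpen_Ioi.mem_nhds hr)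
  have hYd2 : ∀ r : ℝ, 1 < r → DifferentiableAt ℝ (deriv Y) r := fun r hr =>
    ((hregY.deriv_of_isOpen (m := 1) isOpen_Ioi (by norm_num)).differentiableOn
      one_ne_zero).differentiableAt (isOpen_Ioi.mem_nhds hr)
  -- rewrite nonlinearity
  have habs : ∀ x : ℝ, |x| ^ (2 * m) * x = x ^ (2 * m + 1) := by
    intro x
    rw [Even.pow_abs (even_two_mul m), pow_succ]
  have hodeQ : ∀ r : ℝ, 1 < r →
      deriv (deriv Q) r = -((2 / r) * deriv Q r) - Q r ^ (2 * m + 1) := by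
    intro r hr
    have := heqQ r hr
    rw [habs] at this
    linarith
  have hodeY : ∀ r : ℝ, 1 < r →
      deriv (deriv Y) r = -((2 / r) * deriv Y r) - Y r ^ (2 * m + 1) := by
    intro r hr
    have := heqY r hr
    rw [habs] at this
    linarith
  -- pointwise bounds
  have hQb : ∀ r : ℝ, 1 ≤ r → |Q r| ≤ C / r := fun r hr =>
    le_trans (le_add_of_nonneg_right (abs_nonneg _)) (hbound r hr)
  have hYb : ∀ r : ℝ, 1 ≤ r → |Y r| ≤ C / r := fun r hr =>
    le_trans (le_add_of_nonneg_left (abs_nonneg _)) (hbound r hr)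
  -- Lipschitz-type bound for the nonlinearity
  set K : ℝ := (2 * m + 1) * C ^ (2 * m) with hK_def
  have hK : 0 < K := by positivity
  have hnl : ∀ r : ℝ, 1 ≤ r →
      |Q r ^ (2 * m + 1) - Y r ^ (2 * m + 1)| ≤ K / r ^ (2 * m) * |Q r - Y r| := by
    intro r hr
    have hr0 : (0:ℝ) < r := by linarith
    have h1 := aux_pow_lip (2 * m + 1) (Q r) (Y r)
    have hmax : max |Q r| |Y r| ≤ C / r :=
      max_le (hQb r hr) (hYb r hr)
    have hmax0 : 0 ≤ max |Q r| |Y r| := le_trans (abs_nonneg _) (le_max_left _ _)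
    have h2 : max |Q r| |Y r| ^ (2 * m + 1 - 1) ≤ (C / r) ^ (2 * m) := by
      rw [show 2 * m + 1 - 1 = 2 * m from rfl]
      exact pow_le_pow_left₀ hmax0 hmax _
    calc |Q r ^ (2 * m + 1) - Y r ^ (2 * m + 1)|
        ≤ (2 * m + 1 : ℕ) * max |Q r| |Y r| ^ (2 * m + 1 - 1) * |Q r - Y r| := h1
      _ ≤ (2 * m + 1 : ℕ) * (C / r) ^ (2 * m) * |Q r - Y r| := by
          gcongr
      _ = K / r ^ (2 * m) * |Q r - Y r| := by
          rw [hK_def, div_pow]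
          push_cast
          ring
  -- the function G r = r * (Q r - Y r)
  set G : ℝ → ℝ := fun r => r * (Q r - Y r) with hG_def
  have hGd : ∀ r : ℝ, 1 < r →
      HasDerivAt G ((Q r - Y r) + r * (deriv Q r - deriv Y r)) r := by
    intro r hr
    have h := (hasDerivAt_id r).mul (((hQd r hr).hasDerivAt).sub ((hYd r hr).hasDerivAt))
    convert h using 1
    · rfl
    · rfl
    · rfl
    simp only [id_eq, Pi.sub_apply]
    ring
  have hGd2 : ∀ r : ℝ, 1 < r →
      deriv (deriv G) r = 2 * (deriv Q r - deriv Y r)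
        + r * (deriv (deriv Q) r - deriv (deriv Y) r) := by
    intro r hr
    have hev : deriv G =ᶠ[nhds r]
        (fun s => (Q s - Y s) + s * (deriv Q s - deriv Y s)) := by
      filter_upwards [isOpen_Ioi.mem_nhds (show r ∈ Ioi 1 from hr)] with x hx
      exact (hGd x hx).deriv
    rw [hev.deriv_eq]
    have h : HasDerivAt (fun s => (Q s - Y s) + s * (deriv Q s - deriv Y s))
        ((deriv Q r - deriv Y r) + (1 * (deriv Q r - deriv Y r)
          + r * (deriv (deriv Q) r - deriv (deriv Y) r))) r := by
      exact (((hQd r hr).hasDerivAt).sub ((hYd r hr).hasDerivAt)).add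
        ((hasDerivAt_id r).mul (((hQd2 r hr).hasDerivAt).sub ((hYd2 r hr).hasDerivAt)))
    rw [h.deriv]
    ring
  have hGode : ∀ r : ℝ, 1 < r →
      deriv (deriv G) r = -(r * (Q r ^ (2 * m + 1) - Y r ^ (2 * m + 1))) := by
    intro r hr
    have hr0 : r ≠ 0 := by positivity
    rw [hGd2 r hr, hodeQ r hr, hodeY r hr]
    field_simp
    ring
  have hGpp : ∀ r : ℝ, 1 < r → |deriv (deriv G) r| ≤ K / r ^ (2 * m) * |G r| := by
    intro r hr
    have hr0 : (0:ℝ) < r := by linarith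
    rw [hGode r hr, abs_neg, abs_mul, abs_of_pos hr0]
    have h := hnl r hr.le
    calc r * |Q r ^ (2 * m + 1) - Y r ^ (2 * m + 1)|
        ≤ r * (K / r ^ (2 * m) * |Q r - Y r|) := by gcongr
      _ = K / r ^ (2 * m) * |G r| := by
          rw [hG_def]
          simp only [abs_mul, abs_of_pos hr0]
          ring
  have hGd' : ∀ r : ℝ, 1 < r → DifferentiableAt ℝ G r := fun r hr =>
    (hGd r hr).differentiableAt
  have hGd2' : ∀ r : ℝ, 1 < r → DifferentiableAt ℝ (deriv G) r := by
    intro r hr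
    have hev : (fun s => (Q s - Y s) + s * (deriv Q s - deriv Y s)) =ᶠ[nhds r]
        deriv G := by
      filter_upwards [isOpen_Ioi.mem_nhds (show r ∈ Ioi 1 from hr)] with x hx
      exact ((hGd x hx).deriv).symm
    have hdf : DifferentiableAt ℝ (fun s => (Q s - Y s) + s * (deriv Q s - deriv Y s)) r :=
      ((((hQd r hr)).sub ((hYd r hr))).add
        ((differentiableAt_fun_id).mul (((hQd2 r hr)).sub ((hYd2 r hr)))))
    exact hdf.congr_of_eventuallyEq hev.symm
  -- iteration constants
  set d : ℕ := 2 * m - 2 with hd_def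
  have hd2m : d + 2 = 2 * m := by omega
  have hd1 : 1 ≤ d := by omega
  set R1 : ℝ := max R0 (max 2 (2 * K)) with hR1_def
  have hR1_2 : (2:ℝ) ≤ R1 := le_trans (le_max_left _ _) (le_max_right _ _)
  have hR1_1 : (1:ℝ) < R1 := by linarith
  have hR1_R0 : R0 ≤ R1 := le_max_left _ _
  have hR1_K : 2 * K ≤ R1 := le_trans (le_max_right _ _) (le_max_right _ _)
  -- iteration
  have hiter : ∀ n : ℕ, ∀ ρ : ℝ, R1 ≤ ρ → |G ρ| ≤ C * K ^ n / ρ ^ (d * (n + 1)) := by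
    intro n
    induction n with
    | zero =>
      intro ρ hρ
      have h := hdiff ρ (le_trans hR1_R0 hρ)
      have : G ρ = ρ * Q ρ - ρ * Y ρ := by rw [hG_def]; ring
      rw [this]
      simpa [hd_def] using h
    | succ n ih =>
      intro ρ hρ
      -- second derivative bound from ih
      have hbd : ∀ t : ℝ, R1 ≤ t → |deriv (deriv G) t|
          ≤ (C * K ^ (n + 1)) / t ^ (d * (n + 2) + 2) := by
        intro t ht
        have ht1 : 1 < t := lt_of_lt_of_le hR1_1 ht
        have ht0 : (0:ℝ) < t := by linarith
        calc |deriv (deriv G) t| ≤ K / t ^ (2 * m) * |G t| := hGpp t ht1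
          _ ≤ K / t ^ (2 * m) * (C * K ^ n / t ^ (d * (n + 1))) := by
              gcongr
              exact ih t ht
          _ = (C * K ^ (n + 1)) / t ^ (d * (n + 1) + 2 * m) := by
              rw [div_mul_div_comm, ← pow_add]
              ring
          _ = (C * K ^ (n + 1)) / t ^ (d * (n + 2) + 2) := by
              congr 2
              rw [show d * (n + 2) + 2 = d * (n + 1) + (d + 2) by ring, hd2m]
      have h := aux_decay G hGd' hGd2' R1 (C * K ^ (n + 1)) hR1_1 (by positivity)
        (d * (n + 2)) (Nat.mul_pos (by omega) (by omega)) hbd hlim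
      have hρ1 : (1:ℝ) < ρ := lt_of_lt_of_le hR1_1 hρ
      have hρ0 : (0:ℝ) < ρ := by linarith
      set j : ℕ := d * (n + 2) with hj_def
      have hden1 : (1:ℝ) ≤ ((j:ℝ) + 1) * j := by
        have : (1:ℝ) ≤ (j:ℝ) := by
          have : 1 ≤ j := Nat.mul_pos (by omega) (by omega)
          exact_mod_cast this
        nlinarith
      calc |G ρ| ≤ (C * K ^ (n + 1) / (((j:ℝ) + 1) * j)) / ρ ^ j := h ρ hρ
        _ ≤ (C * K ^ (n + 1)) / ρ ^ j := by
            gcongr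
            exact div_le_self (by positivity) hden1
  -- tail vanishing
  have htail : ∀ r : ℝ, R1 ≤ r → Q r = Y r := by
    intro r hr
    have hr1 : (1:ℝ) < r := lt_of_lt_of_le hR1_1 hr
    have hr0 : (0:ℝ) < r := by linarith
    set q : ℝ := K / r ^ d with hq_def
    have hq0 : 0 ≤ q := by positivity
    have hq1 : q < 1 := by
      rw [hq_def, div_lt_one (by positivity)]
      have h1 : r ≤ r ^ d := le_self_pow₀ (by linarith) (by omega)
      have h2 : 2 * K ≤ r := le_trans hR1_K hr
      linarith [hK]
    have hterm : ∀ n : ℕ, C * K ^ n / r ^ (d * (n + 1)) = (C / r ^ d) * q ^ n := by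
      intro n
      rw [hq_def, div_pow, ← pow_mul]
      rw [div_mul_div_comm, ← pow_add]
      congr 2
      ring
    have htend : Tendsto (fun n : ℕ => C * K ^ n / r ^ (d * (n + 1))) atTop (nhds 0) := by
      have h1 : Tendsto (fun n : ℕ => (C / r ^ d) * q ^ n) atTop (nhds ((C / r ^ d) * 0)) :=
        (tendsto_pow_atTop_nhds_zero_of_lt_one hq0 hq1).const_mul _
      rw [mul_zero] at h1
      refine h1.congr fun n => (hterm n).symm
    have hGabs : |G r| ≤ 0 := by
      refine ge_of_tendsto' htend fun n => hiter n r hr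
    have hG0 : G r = 0 := abs_eq_zero.mp (le_antisymm hGabs (abs_nonneg _))
    have : Q r - Y r = 0 := by
      have := hG0
      rw [hG_def] at this
      simp only at this
      rcases mul_eq_zero.mp this with h | h
      · exact absurd h (by positivity)
      · exact h
    linarith
  -- backward uniqueness via Gronwall
  set g : ℝ → ℝ := fun t => Q t - Y t with hg2_def
  have hgd : ∀ t : ℝ, 1 < t → HasDerivAt g (deriv Q t - deriv Y t) t := fun t ht =>
    ((hQd t ht).hasDerivAt).sub ((hYd t ht).hasDerivAt)
  have hgderiv : ∀ t : ℝ, 1 < t → deriv g t = deriv Q t - deriv Y t := fun t ht =>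
    (hgd t ht).deriv
  have hgdd : ∀ t : ℝ, 1 < t →
      HasDerivAt (deriv g) (deriv (deriv Q) t - deriv (deriv Y) t) t := by
    intro t ht
    have hev : (fun s => deriv Q s - deriv Y s) =ᶠ[nhds t] deriv g := by
      filter_upwards [isOpen_Ioi.mem_nhds (show t ∈ Ioi 1 from ht)] with x hx
      exact (hgderiv x hx).symm
    exact (((hQd2 t ht).hasDerivAt).sub ((hYd2 t ht).hasDerivAt)).congr_of_eventuallyEq
      hev.symm
  have hgdd_eq : ∀ t : ℝ, 1 < t →
      deriv (deriv g) t = -((2 / t) * deriv g t)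
        - (Q t ^ (2 * m + 1) - Y t ^ (2 * m + 1)) := by
    intro t ht
    rw [(hgdd t ht).deriv, hodeQ t ht, hodeY t ht, hgderiv t ht]
    ring
  have tail0 : ∀ t : ℝ, R1 ≤ t → g t = 0 := by
    intro t ht
    rw [hg2_def]
    simp only [htail t ht, sub_self]
  set R2 : ℝ := R1 + 1 with hR2_def
  have hgR2 : g R2 = 0 := tail0 _ (by rw [hR2_def]; linarith)
  have hdgR2 : deriv g R2 = 0 := by
    have hev : g =ᶠ[nhds R2] (fun _ => (0:ℝ)) := by
      filter_upwards [isOpen_Ioi.mem_nhds (show R2 ∈ Ioi R1 by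
        rw [hR2_def]; exact lt_add_one R1)] with x hx
      exact tail0 x (le_of_lt hx)
    rw [hev.deriv_eq, deriv_const]
  intro r hr
  by_cases hcase : R1 ≤ r
  · exact htail r hcase
  push_neg at hcase
  have hrR2 : r < R2 := by rw [hR2_def]; linarith
  set a : ℝ := (1 + r) / 2 with ha_def
  have ha1 : 1 < a := by rw [ha_def]; linarith
  have har : a < r := by rw [ha_def]; linarith
  have ha0 : 0 < a := by linarith
  set K2 : ℝ := 2 / a + K + 1 with hK2_def
  have hK2_1 : 1 ≤ K2 := by
    rw [hK2_def]
    have : 0 < 2 / a := by positivity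
    linarith [hK.le]
  set V : ℝ → ℝ × ℝ := fun t => (g t, deriv g t) with hV_def
  have hVd : ∀ t : ℝ, 1 < t →
      HasDerivAt V (deriv g t, deriv (deriv g) t) t := by
    intro t ht
    exact HasDerivAt.prodMk ((hgd t ht).differentiableAt.hasDerivAt)
      ((hgdd t ht).differentiableAt.hasDerivAt)
  have hnormb : ∀ t : ℝ, a ≤ t → t ≤ R2 →
      ‖(deriv g t, deriv (deriv g) t)‖ ≤ K2 * ‖V t‖ := by
    intro t hta htR
    have ht1 : 1 < t := lt_of_lt_of_le ha1 hta
    have ht0 : (0:ℝ) < t := by linarith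
    have h2t : 2 / t ≤ 2 / a := by
      apply div_le_div_of_nonneg_left (by norm_num) ha0 hta
    have hpow1 : (1:ℝ) ≤ t ^ (2 * m) := one_le_pow₀ (by linarith)
    have hKt : K / t ^ (2 * m) ≤ K := by
      rw [div_le_iff₀ (by positivity)]
      nlinarith [hK.le]
    have hdd : |deriv (deriv g) t| ≤ (2 / a) * |deriv g t| + K * |g t| := by
      rw [hgdd_eq t ht1]
      have part1 : |(-((2 / t) * deriv g t))| ≤ (2 / a) * |deriv g t| := by
        rw [abs_neg, abs_mul, abs_of_pos (by positivity : (0:ℝ) < 2 / t)]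
        exact mul_le_mul_of_nonneg_right h2t (abs_nonneg _)
      have part2 : |Q t ^ (2 * m + 1) - Y t ^ (2 * m + 1)| ≤ K * |g t| := by
        refine (hnl t ht1.le).trans ?_
        exact mul_le_mul_of_nonneg_right hKt (abs_nonneg _)
      calc |(-((2 / t) * deriv g t)) - (Q t ^ (2 * m + 1) - Y t ^ (2 * m + 1))|
          ≤ |(-((2 / t) * deriv g t))| + |Q t ^ (2 * m + 1) - Y t ^ (2 * m + 1)| :=
            abs_sub _ _
        _ ≤ (2 / a) * |deriv g t| + K * |g t| := add_le_add part1 part2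
    rw [Prod.norm_def, Prod.norm_def]
    simp only [Real.norm_eq_abs]
    have hm1 : |deriv g t| ≤ K2 * max |g t| |deriv g t| := by
      calc |deriv g t| ≤ max |g t| |deriv g t| := le_max_right _ _
        _ ≤ K2 * max |g t| |deriv g t| :=
            le_mul_of_one_le_left (le_trans (abs_nonneg _) (le_max_left _ _)) hK2_1
    have hm2 : |deriv (deriv g) t| ≤ K2 * max |g t| |deriv g t| := by
      refine hdd.trans ?_
      have h1 : |deriv g t| ≤ max |g t| |deriv g t| := le_max_right _ _
      have h2 : |g t| ≤ max |g t| |deriv g t| := le_max_left _ _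
      have h3 : 0 ≤ max |g t| |deriv g t| :=
        le_trans (abs_nonneg _) (le_max_left _ _)
      have h4 : 0 < 2 / a := by positivity
      calc (2 / a) * |deriv g t| + K * |g t|
          ≤ (2 / a) * max |g t| |deriv g t| + K * max |g t| |deriv g t| :=
            add_le_add (mul_le_mul_of_nonneg_left h1 h4.le)
              (mul_le_mul_of_nonneg_left h2 hK.le)
        _ ≤ K2 * max |g t| |deriv g t| := by
            rw [hK2_def]
            nlinarith [h3]
    exact max_le hm1 hm2
  set W : ℝ → ℝ × ℝ := fun t => V (a + R2 - t) with hW_def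
  have hWd : ∀ t : ℝ, a ≤ t → t ≤ R2 →
      HasDerivAt W ((-1 : ℝ) •
        (deriv g (a + R2 - t), deriv (deriv g) (a + R2 - t))) t := by
    intro t h1 h2
    have hs1 : 1 < a + R2 - t := by linarith
    have hinner : HasDerivAt (fun t : ℝ => a + R2 - t) (-1) t := by
      simpa using (hasDerivAt_id t).const_sub (a + R2)
    exact (hVd _ hs1).scomp t hinner
  have hWa : ‖W a‖ ≤ 0 := by
    have he : a + R2 - a = R2 := by ring
    rw [hW_def]
    simp only [he]
    rw [hV_def]
    simp only [hgR2, hdgR2]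
    rw [Prod.norm_def]
    simp
  have happ := norm_le_gronwallBound_of_norm_deriv_right_le
    (f := W)
    (f' := fun t => (-1 : ℝ) • (deriv g (a + R2 - t), deriv (deriv g) (a + R2 - t)))
    (δ := 0) (K := K2) (ε := 0) (a := a) (b := R2)
    (fun t ht => ((hWd t ht.1 ht.2).continuousAt).continuousWithinAt)
    (fun x hx => (hWd x hx.1 hx.2.le).hasDerivWithinAt)
    hWa
    (by
      intro x hx
      have hsa : a ≤ a + R2 - x := by
        rcases hx with ⟨hx1, hx2⟩
        linarith
      have hsR : a + R2 - x ≤ R2 := by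
        rcases hx with ⟨hx1, hx2⟩
        linarith
      rw [norm_smul]
      simp only [norm_neg, norm_one]
      rw [one_mul, add_zero]
      exact hnormb _ hsa hsR)
  have hfin := happ (a + R2 - r) ⟨by linarith, by linarith⟩
  rw [gronwallBound_ε0_δ0] at hfin
  have he : a + R2 - (a + R2 - r) = r := by ring
  rw [hW_def] at hfin
  simp only [he] at hfin
  have hV0 : V r = 0 := norm_le_zero_iff.mp hfin
  have : g r = 0 := congrArg Prod.fst hV0
  rw [hg2_def] at this
  simp only at this
  linarith
end
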